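/- arXiv:1504.03037 — 3 statements merged into one kernel-verified Lean document; each statement's English description precedes it below -/
import Mathlib

section
/- Let A be a CLO, let B ⊆ A be a convex subset regarded as an L_κ-structure with the induced order and unary predicates, let φ(x̄,ȳ) be an L_κ-formula, and let ā be a tuple of elements of A∖B. Then there is an L_κ-formula ψ(x̄) without parameters such that for every tuple b̄ of elements of B, B ⊨ ψ(b̄) if and only if A ⊨ φ(b̄,ā). -/
open FirstOrder Language Set

/-- Relation symbols of the language `L_κ` of colored linear orders:
a binary `<` and a unary color predicate for each `i : ι`. -/
inductive CLORel (ι : Type) : ℕ → Type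
  | lt : CLORel ι 2
  | color (i : ι) : CLORel ι 1

/-- The language `L_κ`, where the colors are indexed by `ι`. -/
def CLOLang (ι : Type) : Language :=
  ⟨fun _ => Empty, CLORel ι⟩

/-- Interpretation of the relation symbols on a linear order `M` with colors `c`. -/
def cloRelMap {ι M : Type} [LinearOrder M] (c : ι → Set M) :
    ∀ {n}, CLORel ι n → (Fin n → M) → Prop
  | _, .lt => fun v => v 0 < v 1
  | _, .color i => fun v => v 0 ∈ c i

/-- The canonical `L_κ`-structure (a colored linear order, CLO) on a linear
order `M` whose colors are given by `c : ι → Set M`. -/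
def CLOStr (ι M : Type) [LinearOrder M] (c : ι → Set M) : (CLOLang ι).Structure M where
  funMap := fun f => Empty.elim f
  RelMap := cloRelMap c

/-- Satisfaction of an `L_κ`-formula in the CLO `(M, <, c)`. -/
def Sat {ι : Type} (M : Type) [LinearOrder M] (c : ι → Set M) {α : Type}
    (φ : (CLOLang ι).Formula α) (v : α → M) : Prop :=
  letI := CLOStr ι M c
  φ.Realize v

/-- The induced colors on a subset of a CLO. -/
def subColor {ι M : Type} (c : ι → Set M) (s : Set M) : ι → Set s :=
  fun i => {x | (x : M) ∈ c i}

/-- Elementary equivalence of CLOs. -/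
def CLOEquiv (ι : Type) (M : Type) [LinearOrder M] (cM : ι → Set M)
    (N : Type) [LinearOrder N] (cN : ι → Set N) : Prop :=
  letI := CLOStr ι M cM
  letI := CLOStr ι N cN
  M ≅[CLOLang ι] N

/-- Isomorphism of CLOs (as `L_κ`-structures). -/
def CLOIso (ι : Type) (M : Type) [LinearOrder M] (cM : ι → Set M)
    (N : Type) [LinearOrder N] (cN : ι → Set N) : Prop :=
  letI := CLOStr ι M cM
  letI := CLOStr ι N cN
  Nonempty (M ≃[CLOLang ι] N)

/-- The complete theory of a CLO. -/
def CLOTheory (ι : Type) (M : Type) [LinearOrder M] (c : ι → Set M) : (CLOLang ι).Theory :=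
  letI := CLOStr ι M c
  (CLOLang ι).completeTheory M

/-- The induced colors on a lexicographic sum `Σₗ i, A i` of CLOs. -/
def sigmaColor {ι I : Type} {A : I → Type} (c : ∀ i, ι → Set (A i)) :
    ι → Set (Σₗ i, A i) :=
  fun k => {x | (ofLex x).2 ∈ c (ofLex x).1 k}

/-- The induced colors on a two-term lexicographic sum `α ⊕ₗ β` of CLOs. -/
def sumColor2 {ι α β : Type} (ca : ι → Set α) (cb : ι → Set β) : ι → Set (α ⊕ₗ β) :=
  fun k => {x | Sum.elim (· ∈ ca k) (· ∈ cb k) (ofLex x)}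

/-- The set defined by a parameter-free formula in one variable in a CLO. -/
def FmlSet (ι : Type) (M : Type) [LinearOrder M] (c : ι → Set M)
    (φ : (CLOLang ι).Formula Unit) : Set M :=
  {x | Sat M c φ fun _ => x}

/-- A CLO is self-additive if it has more than one point and its only
convex parameter-free-definable subsets are `∅` and the whole order. -/
def SelfAdditive (ι : Type) (M : Type) [LinearOrder M] (c : ι → Set M) : Prop :=
  Nontrivial M ∧
    ∀ φ : (CLOLang ι).Formula Unit, (FmlSet ι M c φ).OrdConnected →
      FmlSet ι M c φ = ∅ ∨ FmlSet ι M c φ = Set.univ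

/-- `a ∼ b`: some set definable with parameter `a` is convex, bounded above and
below, and contains both `a` and `b`. -/
def SimRel (ι : Type) {M : Type} [LinearOrder M] (c : ι → Set M) (a b : M) : Prop :=
  ∃ φ : (CLOLang ι).Formula (Unit ⊕ Unit),
    (Set.OrdConnected {x | Sat M c φ (Sum.elim (fun _ => x) fun _ => a)}) ∧
    (∃ u : M, ∀ z ∈ {x | Sat M c φ (Sum.elim (fun _ => x) fun _ => a)}, z < u) ∧
    (∃ l : M, ∀ z ∈ {x | Sat M c φ (Sum.elim (fun _ => x) fun _ => a)}, l < z) ∧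
    a ∈ {x | Sat M c φ (Sum.elim (fun _ => x) fun _ => a)} ∧
    b ∈ {x | Sat M c φ (Sum.elim (fun _ => x) fun _ => a)}

/-- `f : M → N` is an elementary map of CLOs. -/
def IsElemMap (ι : Type) {M N : Type} [LinearOrder M] [LinearOrder N]
    (cM : ι → Set M) (cN : ι → Set N) (f : M → N) : Prop :=
  ∀ (k : ℕ) (φ : (CLOLang ι).Formula (Fin k)) (v : Fin k → M),
    Sat M cM φ v ↔ Sat N cN φ (f ∘ v)

/-- A subset of a CLO, with its induced structure, is an elementary substructure. -/
def IsElemSubset (ι : Type) (B : Type) [LinearOrder B] (cB : ι → Set B) (s : Set B) : Prop :=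
  IsElemMap ι (subColor cB s) cB (Subtype.val : s → B)

/-- A complete `L_κ`-theory is ℵ₀-categorical: any two at-most-countable CLO
models of it are isomorphic.  (Finite and empty models are allowed.) -/
def Aleph0CatTheory (ι : Type) (T : (CLOLang ι).Theory) : Prop :=
  ∀ (N₁ N₂ : Type) (i₁ : LinearOrder N₁) (i₂ : LinearOrder N₂)
    (c₁ : ι → Set N₁) (c₂ : ι → Set N₂),
    Countable N₁ → Countable N₂ →
    (letI := i₁; CLOTheory ι N₁ c₁) = T → (letI := i₂; CLOTheory ι N₂ c₂) = T →
    (letI := i₁; letI := i₂; CLOIso ι N₁ c₁ N₂ c₂)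

/-- `φ` is a convex formula for the complete theory of the CLO `(M₀, c₀)`:
its realizations in every model of that theory form a convex set. -/
def ConvexFml (ι : Type) (M₀ : Type) [LinearOrder M₀] (c₀ : ι → Set M₀)
    (φ : (CLOLang ι).Formula Unit) : Prop :=
  ∀ (B : Type) (iB : LinearOrder B) (cB : ι → Set B),
    (letI := iB; CLOEquiv ι B cB M₀ c₀) → (letI := iB; Set.OrdConnected (FmlSet ι B cB φ))

/-- The set of common realizations of a set of one-variable formulas in a CLO. -/
def TypeSet (ι : Type) (M : Type) [LinearOrder M] (c : ι → Set M)
    (Φ : Set ((CLOLang ι).Formula Unit)) : Set M :=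
  {x | ∀ φ ∈ Φ, Sat M c φ fun _ => x}

/-- A set of one-variable formulas is consistent with the complete theory of
`(M₀, c₀)`: it is realized in some model of that theory. -/
def TypeConsistent (ι : Type) (M₀ : Type) [LinearOrder M₀] (c₀ : ι → Set M₀)
    (Φ : Set ((CLOLang ι).Formula Unit)) : Prop :=
  ∃ (B : Type) (iB : LinearOrder B) (cB : ι → Set B),
    (letI := iB; CLOEquiv ι B cB M₀ c₀) ∧ (letI := iB; ∃ b : B, b ∈ TypeSet ι B cB Φ)

/-- `Φ` is a convex type of the complete theory of `(M₀, c₀)`: a maximal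
consistent set of convex formulas over `∅`.  `IT(T)` is the set of all such. -/
def IsConvexType (ι : Type) (M₀ : Type) [LinearOrder M₀] (c₀ : ι → Set M₀)
    (Φ : Set ((CLOLang ι).Formula Unit)) : Prop :=
  (∀ φ ∈ Φ, ConvexFml ι M₀ c₀ φ) ∧ TypeConsistent ι M₀ c₀ Φ ∧
    ∀ ψ, ConvexFml ι M₀ c₀ ψ → TypeConsistent ι M₀ c₀ (insert ψ Φ) → ψ ∈ Φ

/-- A convex type is isolated if it contains a convex formula contained in no
other convex type. -/
def IsolatedCT (ι : Type) (M₀ : Type) [LinearOrder M₀] (c₀ : ι → Set M₀)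
    (Φ : Set ((CLOLang ι).Formula Unit)) : Prop :=
  ∃ φ ∈ Φ, ConvexFml ι M₀ c₀ φ ∧
    ∀ Ψ, IsConvexType ι M₀ c₀ Ψ → φ ∈ Ψ → Ψ = Φ

/-- A CLO is ℵ₀-saturated: every finitely-satisfiable set of formulas in one
variable over finitely many parameters is realized. -/
def Aleph0Saturated (ι : Type) (S : Type) [LinearOrder S] (cS : ι → Set S) : Prop :=
  ∀ (m : ℕ) (a : Fin m → S) (p : Set ((CLOLang ι).Formula (Unit ⊕ Fin m))),
    (∀ q : Finset ((CLOLang ι).Formula (Unit ⊕ Fin m)), ↑q ⊆ p →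
      ∃ x : S, ∀ φ ∈ q, Sat S cS φ (Sum.elim (fun _ => x) a)) →
    ∃ x : S, ∀ φ ∈ p, Sat S cS φ (Sum.elim (fun _ => x) a)

/-- A CLO is strongly ℵ₀-homogeneous: finite tuples with the same complete type
are conjugate under an automorphism. -/
def StronglyAleph0Homogeneous (ι : Type) (S : Type) [LinearOrder S] (cS : ι → Set S) : Prop :=
  ∀ (m : ℕ) (a b : Fin m → S),
    (∀ φ : (CLOLang ι).Formula (Fin m), Sat S cS φ a ↔ Sat S cS φ b) →
    ∃ g : S ≃ S, (∀ x y : S, x < y ↔ g x < g y) ∧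
      (∀ (k : ι) (x : S), x ∈ cS k ↔ g x ∈ cS k) ∧ ∀ i, g (a i) = b i

/-- Sufficiently saturated: ℵ₀-saturated and strongly ℵ₀-homogeneous. -/
def SuffSaturated (ι : Type) (S : Type) [LinearOrder S] (cS : ι → Set S) : Prop :=
  Aleph0Saturated ι S cS ∧ StronglyAleph0Homogeneous ι S cS

/-- The complete theory of `(M₀, c₀)` is locally simple: for every sufficiently
saturated model `S` and every convex type `Φ`, the theory `T_Φ = Th(Φ(S))` is
ℵ₀-categorical. -/
def LocallySimple (ι : Type) (M₀ : Type) [LinearOrder M₀] (c₀ : ι → Set M₀) : Prop :=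
  ∀ (S : Type) [LinearOrder S], ∀ (cS : ι → Set S),
    CLOEquiv ι S cS M₀ c₀ → SuffSaturated ι S cS →
    ∀ Φ, IsConvexType ι M₀ c₀ Φ →
      Aleph0CatTheory ι
        (CLOTheory ι (TypeSet ι S cS Φ) (subColor cS (TypeSet ι S cS Φ)))

/-- A finite set of pairs is a partial isomorphism of CLOs: it preserves `<`,
equality, and each color, in both directions. -/
def IsPartialIso (ι : Type) {M N : Type} [LinearOrder M] [LinearOrder N]
    (cM : ι → Set M) (cN : ι → Set N) (f : Finset (M × N)) : Prop :=
  ∀ p ∈ f, ∀ q ∈ f,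
    (p.1 < q.1 ↔ p.2 < q.2) ∧ (p.1 = q.1 ↔ p.2 = q.2) ∧
    ∀ k, p.1 ∈ cM k ↔ p.2 ∈ cN k

/-- Back-and-forth equivalence of CLOs: a nonempty family of finite partial
isomorphisms with the back-and-forth extension properties. -/
def BackForthEquiv (ι : Type) (M : Type) [LinearOrder M] (cM : ι → Set M)
    (N : Type) [LinearOrder N] (cN : ι → Set N) : Prop :=
  ∃ F : Set (Finset (M × N)), F.Nonempty ∧ (∀ f ∈ F, IsPartialIso ι cM cN f) ∧
    (∀ f ∈ F, ∀ m : M, ∃ g ∈ F, f ⊆ g ∧ ∃ n : N, (m, n) ∈ g) ∧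
    (∀ f ∈ F, ∀ n : N, ∃ g ∈ F, f ⊆ g ∧ ∃ m : M, (m, n) ∈ g)

/-- The set of complete theories `Th(Φ(A))` as `A` ranges over models of the
complete theory of `(M₀, c₀)` (including the theory of the empty structure,
in case `Φ` is omitted). -/
def TheoriesAt (ι : Type) (M₀ : Type) [LinearOrder M₀] (c₀ : ι → Set M₀)
    (Φ : Set ((CLOLang ι).Formula Unit)) : Set ((CLOLang ι).Theory) :=
  {T | ∃ (A : Type) (iA : LinearOrder A) (cA : ι → Set A),
    (letI := iA; CLOEquiv ι A cA M₀ c₀) ∧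
    T = (letI := iA; CLOTheory ι (TypeSet ι A cA Φ) (subColor cA (TypeSet ι A cA Φ)))}

namespace CLOAux


variable {L : Language} {N₀ N₁ N₂ : Type} [L.Structure N₀] [L.Structure N₁] [L.Structure N₂]
variable {γ₀ γ₁ γ₂ : Type}

/-- A triple of formulas, one for each of the three parts. -/
abbrev Tr (L : Language) (γ₀ γ₁ γ₂ : Type) : Type _ :=
  L.Formula γ₀ × L.Formula γ₁ × L.Formula γ₂

def TRe (t : Tr L γ₀ γ₁ γ₂) (u₀ : γ₀ → N₀) (u₁ : γ₁ → N₁) (u₂ : γ₂ → N₂) : Prop :=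
  t.1.Realize u₀ ∧ t.2.1.Realize u₁ ∧ t.2.2.Realize u₂

def LRe (l : List (Tr L γ₀ γ₁ γ₂)) (u₀ : γ₀ → N₀) (u₁ : γ₁ → N₁) (u₂ : γ₂ → N₂) : Prop :=
  ∃ t ∈ l, TRe t u₀ u₁ u₂

def andT (s t : Tr L γ₀ γ₁ γ₂) : Tr L γ₀ γ₁ γ₂ :=
  (s.1 ⊓ t.1, s.2.1 ⊓ t.2.1, s.2.2 ⊓ t.2.2)

def prodL (l₁ l₂ : List (Tr L γ₀ γ₁ γ₂)) : List (Tr L γ₀ γ₁ γ₂) :=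
  l₁.flatMap fun s => l₂.map (andT s)

def negT (t : Tr L γ₀ γ₁ γ₂) : List (Tr L γ₀ γ₁ γ₂) :=
  [(t.1.not, ⊤, ⊤), (⊤, t.2.1.not, ⊤), (⊤, ⊤, t.2.2.not)]

def negL : List (Tr L γ₀ γ₁ γ₂) → List (Tr L γ₀ γ₁ γ₂)
  | [] => [((⊤ : L.Formula γ₀), (⊤ : L.Formula γ₁), (⊤ : L.Formula γ₂))]
  | t :: l => prodL (negT t) (negL l)

variable {u₀ : γ₀ → N₀} {u₁ : γ₁ → N₁} {u₂ : γ₂ → N₂}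

theorem lre_append {l₁ l₂ : List (Tr L γ₀ γ₁ γ₂)} :
    LRe (l₁ ++ l₂) u₀ u₁ u₂ ↔ LRe l₁ u₀ u₁ u₂ ∨ LRe l₂ u₀ u₁ u₂ := by
  simp [LRe, List.mem_append, or_and_right, exists_or]

theorem tre_andT {s t : Tr L γ₀ γ₁ γ₂} :
    TRe (andT s t) u₀ u₁ u₂ ↔ TRe s u₀ u₁ u₂ ∧ TRe t u₀ u₁ u₂ := by
  simp only [TRe, andT, Formula.realize_inf]
  tauto

theorem lre_prodL {l₁ l₂ : List (Tr L γ₀ γ₁ γ₂)} :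
    LRe (prodL l₁ l₂) u₀ u₁ u₂ ↔ LRe l₁ u₀ u₁ u₂ ∧ LRe l₂ u₀ u₁ u₂ := by
  constructor
  · rintro ⟨t, ht, h⟩
    simp only [prodL, List.mem_flatMap, List.mem_map] at ht
    obtain ⟨x, hx, y, hy, rfl⟩ := ht
    rw [tre_andT] at h
    exact ⟨⟨x, hx, h.1⟩, ⟨y, hy, h.2⟩⟩
  · rintro ⟨⟨x, hx, h1⟩, ⟨y, hy, h2⟩⟩
    refine ⟨andT x y, ?_, tre_andT.2 ⟨h1, h2⟩⟩
    simp only [prodL, List.mem_flatMap, List.mem_map]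
    exact ⟨x, hx, y, hy, rfl⟩

theorem lre_negT {t : Tr L γ₀ γ₁ γ₂} :
    LRe (negT t) u₀ u₁ u₂ ↔ ¬ TRe t u₀ u₁ u₂ := by
  simp only [LRe, negT, TRe, List.mem_cons, List.mem_singleton, List.not_mem_nil, or_false]
  constructor
  · rintro ⟨s, (rfl | rfl | rfl), h⟩ <;>
      · simp only [TRe, Formula.realize_not, Formula.realize_top] at h
        tauto
  · intro h
    by_cases h0 : t.1.Realize u₀
    · by_cases h1 : t.2.1.Realize u₁
      · refine ⟨_, Or.inr (Or.inr rfl), ?_⟩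
        simp only [TRe, Formula.realize_not, Formula.realize_top]
        tauto
      · refine ⟨_, Or.inr (Or.inl rfl), ?_⟩
        simp only [TRe, Formula.realize_not, Formula.realize_top]
        tauto
    · refine ⟨_, Or.inl rfl, ?_⟩
      simp only [TRe, Formula.realize_not, Formula.realize_top]
      tauto

theorem lre_negL {l : List (Tr L γ₀ γ₁ γ₂)} :
    LRe (negL l) u₀ u₁ u₂ ↔ ¬ LRe l u₀ u₁ u₂ := by
  induction l with
  | nil => simp [negL, LRe, TRe, Formula.realize_top]
  | cons t l ih =>
    rw [show negL (t :: l) = prodL (negT t) (negL l) from rfl, lre_prodL, lre_negT, ih]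
    simp only [LRe, List.mem_cons]
    push_neg
    constructor
    · rintro ⟨h1, h2⟩ s hs
      rcases hs with rfl | hs
      · exact h1
      · exact h2 s hs
    · intro h
      exact ⟨h t (Or.inl rfl), fun s hs => h s (Or.inr hs)⟩



section CLO

lemma term_var {ι γ : Type} (t : (CLOLang ι).Term γ) : ∃ i, t = Term.var i := by
  cases t with
  | var i => exact ⟨i, rfl⟩
  | func f ts => exact Empty.elim f

variable {ι M : Type} [LinearOrder M] (c : ι → Set M) (B : Set M)

def lo : Set M := {x | ∀ b ∈ B, x < b}

def up : Set M := {x | ∀ b ∈ B, b < x}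

variable {B}

lemma part_tri (hB : B.OrdConnected) (x : M) : x ∈ lo B ∨ x ∈ B ∨ x ∈ up B := by
  by_cases h1 : x ∈ B
  · exact Or.inr (Or.inl h1)
  by_cases h2 : ∀ b ∈ B, x < b
  · exact Or.inl h2
  refine Or.inr (Or.inr fun b hb => ?_)
  push_neg at h2
  obtain ⟨b₁, hb₁, hle⟩ := h2
  by_contra hxb
  exact h1 (hB.out hb₁ hb ⟨hle, le_of_not_gt hxb⟩)

lemma lo_lt_mem {x b : M} (h : x ∈ lo B) (hb : b ∈ B) : x < b := h b hb

lemma mem_lt_up {x b : M} (hb : b ∈ B) (h : x ∈ up B) : b < x := h b hb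

lemma lo_lt_up (hne : B.Nonempty) {x y : M} (hx : x ∈ lo B) (hy : y ∈ up B) : x < y := by
  obtain ⟨b, hb⟩ := hne
  exact lt_trans (hx b hb) (hy b hb)

lemma lo_ne_mem {x b : M} (h : x ∈ lo B) (hb : b ∈ B) : x ≠ b :=
  ne_of_lt (lo_lt_mem h hb)

lemma lo_ne_up (hne : B.Nonempty) {x y : M} (hx : x ∈ lo B) (hy : y ∈ up B) : x ≠ y :=
  ne_of_lt (lo_lt_up hne hx hy)

end CLO

section Sorting

variable {α : Type} {k : ℕ}

/-- The variables of sort `j`. -/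
def Vs (s : α ⊕ Fin k → Fin 3) (j : Fin 3) : Type := {i : α ⊕ Fin k // s i = j}

variable {ι M : Type} [LinearOrder M] (c : ι → Set M) (B : Set M)

/-- An assignment is compatible with a sorting. -/
def Compat (s : α ⊕ Fin k → Fin 3) (w : α ⊕ Fin k → M) : Prop :=
  ∀ i, (s i = 0 → w i ∈ lo B) ∧ (s i = 1 → w i ∈ B) ∧ (s i = 2 → w i ∈ up B)

variable {B}

def restr0 {s : α ⊕ Fin k → Fin 3} {w : α ⊕ Fin k → M} (hc : Compat B s w) :
    Vs s 0 → ↥(lo B) := fun i => ⟨w i.1, (hc i.1).1 i.2⟩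

def restr1 {s : α ⊕ Fin k → Fin 3} {w : α ⊕ Fin k → M} (hc : Compat B s w) :
    Vs s 1 → ↥B := fun i => ⟨w i.1, (hc i.1).2.1 i.2⟩

def restr2 {s : α ⊕ Fin k → Fin 3} {w : α ⊕ Fin k → M} (hc : Compat B s w) :
    Vs s 2 → ↥(up B) := fun i => ⟨w i.1, (hc i.1).2.2 i.2⟩

/-- Realization of a triple of formulas over the three parts. -/
def CLRe {γ₀ γ₁ γ₂ : Type} (l : List (Tr (CLOLang ι) γ₀ γ₁ γ₂))
    (u₀ : γ₀ → ↥(lo B)) (u₁ : γ₁ → ↥B) (u₂ : γ₂ → ↥(up B)) : Prop :=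
  letI := CLOStr ι ↥(lo B) (subColor c (lo B))
  letI := CLOStr ι ↥B (subColor c B)
  letI := CLOStr ι ↥(up B) (subColor c (up B))
  LRe l u₀ u₁ u₂

variable (B) in
/-- `l` is a correct decomposition of `φ` relative to the sorting `s`. -/
def GoodFor (φ : (CLOLang ι).BoundedFormula α k) (s : α ⊕ Fin k → Fin 3)
    (l : List (Tr (CLOLang ι) (Vs s 0) (Vs s 1) (Vs s 2))) : Prop :=
  ∀ (v : α → M) (xs : Fin k → M) (hc : Compat B s (Sum.elim v xs)),
    (letI := CLOStr ι M c
     φ.Realize v xs) ↔ CLRe c l (restr0 hc) (restr1 hc) (restr2 hc)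

/-- Extending a sorting to one more (the last) bound variable, of sort `j`. -/
def sext (s : α ⊕ Fin k → Fin 3) (j : Fin 3) : α ⊕ Fin (k + 1) → Fin 3 :=
  fun i => match i with
  | .inl x => s (.inl x)
  | .inr i => if h : (i : ℕ) < k then s (.inr ⟨i, h⟩) else j

lemma sext_inl (s : α ⊕ Fin k → Fin 3) (j : Fin 3) (x : α) :
    sext s j (.inl x) = s (.inl x) := rfl

lemma sext_inr_lt (s : α ⊕ Fin k → Fin 3) (j : Fin 3) {i : Fin (k + 1)} (h : (i : ℕ) < k) :
    sext s j (.inr i) = s (.inr ⟨i, h⟩) := dif_pos h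

lemma sext_inr_last (s : α ⊕ Fin k → Fin 3) (j : Fin 3) {i : Fin (k + 1)} (h : ¬ (i : ℕ) < k) :
    sext s j (.inr i) = j := dif_neg h

/-- Map an old variable of sort `j' ≠ j` of the extended context back. -/
def dmap {s : α ⊕ Fin k → Fin 3} {j j' : Fin 3} (hjj : j ≠ j') :
    Vs (sext s j) j' → Vs s j'
  | ⟨.inl x, h⟩ => ⟨.inl x, h⟩
  | ⟨.inr i, h⟩ =>
    if hlt : (i : ℕ) < k then ⟨.inr ⟨i, hlt⟩, by rwa [sext_inr_lt s j hlt] at h⟩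
    else False.elim (hjj (by rwa [sext_inr_last s j hlt] at h))

/-- Map a variable of the quantified sort `j` to the old context plus one. -/
def qmap {s : α ⊕ Fin k → Fin 3} {j : Fin 3} :
    Vs (sext s j) j → Vs s j ⊕ Fin 1
  | ⟨.inl x, h⟩ => .inl ⟨.inl x, h⟩
  | ⟨.inr i, h⟩ =>
    if hlt : (i : ℕ) < k then .inl ⟨.inr ⟨i, hlt⟩, by rwa [sext_inr_lt s j hlt] at h⟩
    else .inr 0

end Sorting

end CLOAux

namespace CLOAux

section Ext

variable {ι M : Type} [LinearOrder M] {c : ι → Set M} {B : Set M}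
variable {α : Type} {k : ℕ}

lemma snoc_lt {X : Type} {xs : Fin k → X} {xv : X} {i : Fin (k + 1)} (h : (i : ℕ) < k) :
    (Fin.snoc xs xv : Fin (k + 1) → X) i = xs ⟨i, h⟩ := by
  have hi : i = Fin.castSucc ⟨i, h⟩ := by
    apply Fin.ext
    rfl
  conv_lhs => rw [hi]
  rw [Fin.snoc_castSucc]

lemma last_of_not_lt {i : Fin (k + 1)} (h : ¬ (i : ℕ) < k) : i = Fin.last k := by
  apply Fin.ext
  have := i.isLt
  simp only [Fin.val_last]
  omega

lemma realize_congr_fin0 {L : Language} {N : Type} [L.Structure N] {γ : Type}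
    (θ : L.BoundedFormula γ 0) (v : γ → N) (xs ys : Fin 0 → N) :
    θ.Realize v xs ↔ θ.Realize v ys := by
  have : xs = ys := funext fun i => i.elim0
  rw [this]

variable {v : α → M} {xs : Fin k → M}

lemma compat_sext0 {s : α ⊕ Fin k → Fin 3} (hc : Compat B s (Sum.elim v xs)) {xv : M}
    (hx : xv ∈ lo B) : Compat B (sext s 0) (Sum.elim v (Fin.snoc xs xv)) := by
  intro i
  cases i with
  | inl a => exact hc (.inl a)
  | inr i =>
    by_cases hlt : (i : ℕ) < k
    · simp only [Sum.elim_inr, snoc_lt hlt, sext_inr_lt s 0 hlt]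
      exact hc (.inr ⟨i, hlt⟩)
    · have hi := last_of_not_lt hlt
      subst hi
      simp only [Sum.elim_inr, Fin.snoc_last,
        sext_inr_last s 0 (show ¬ ((Fin.last k : Fin (k+1)) : ℕ) < k by simp)]
      exact ⟨fun _ => hx, fun h => absurd h (by decide), fun h => absurd h (by decide)⟩

def exT0 {s : α ⊕ Fin k → Fin 3}
    (t : Tr (CLOLang ι) (Vs (sext s 0) 0) (Vs (sext s 0) 1) (Vs (sext s 0) 2)) :
    Tr (CLOLang ι) (Vs s 0) (Vs s 1) (Vs s 2) :=
  ((BoundedFormula.relabel qmap t.1).ex,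
    t.2.1.relabel (dmap (by decide)),
    t.2.2.relabel (dmap (by decide)))

lemma lre_exL0 {s : α ⊕ Fin k → Fin 3} (hc : Compat B s (Sum.elim v xs))
    (l' : List (Tr (CLOLang ι) (Vs (sext s 0) 0) (Vs (sext s 0) 1) (Vs (sext s 0) 2))) :
    CLRe c (l'.map exT0) (restr0 hc) (restr1 hc) (restr2 hc) ↔
      ∃ x : ↥(lo B), CLRe c l' (restr0 (compat_sext0 hc x.2))
        (restr1 (compat_sext0 hc x.2)) (restr2 (compat_sext0 hc x.2)) := by
  letI := CLOStr ι ↥(lo B) (subColor c (lo B))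
  letI := CLOStr ι ↥B (subColor c B)
  letI := CLOStr ι ↥(up B) (subColor c (up B))
  show LRe _ _ _ _ ↔ ∃ x : ↥(lo B), LRe _ _ _ _
  have key : ∀ (t : Tr (CLOLang ι) (Vs (sext s 0) 0) (Vs (sext s 0) 1) (Vs (sext s 0) 2)),
      TRe (exT0 t) (restr0 hc) (restr1 hc) (restr2 hc) ↔
        ∃ x : ↥(lo B), TRe t (restr0 (compat_sext0 hc x.2))
          (restr1 (compat_sext0 hc x.2)) (restr2 (compat_sext0 hc x.2)) := by
    intro t
    have h1 : ∀ x : ↥(lo B),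
        (t.2.1.relabel (dmap (show (0:Fin 3) ≠ 1 by decide))).Realize (restr1 hc) ↔
          t.2.1.Realize (restr1 (compat_sext0 hc x.2)) := by
      intro x
      rw [Formula.realize_relabel]
      have heq : restr1 hc ∘ dmap (show (0 : Fin 3) ≠ 1 by decide)
          = restr1 (compat_sext0 hc x.2) := by
        funext i
        obtain ⟨i, hi⟩ := i
        cases i with
        | inl a => rfl
        | inr i =>
          by_cases hlt : (i : ℕ) < k
          · apply Subtype.ext
            show (restr1 hc (dmap _ ⟨.inr i, hi⟩) : M)
              = (Fin.snoc xs (x : M) : Fin (k+1) → M) i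
            simp only [dmap]
            simp only [hlt, ↓reduceDIte]
            rw [snoc_lt hlt]
            rfl
          · exact absurd hi (by rw [sext_inr_last s 0 hlt]; decide)
      rw [heq]
    have h2 : ∀ x : ↥(lo B),
        (t.2.2.relabel (dmap (show (0:Fin 3) ≠ 2 by decide))).Realize (restr2 hc) ↔
          t.2.2.Realize (restr2 (compat_sext0 hc x.2)) := by
      intro x
      rw [Formula.realize_relabel]
      have heq : restr2 hc ∘ dmap (show (0 : Fin 3) ≠ 2 by decide)
          = restr2 (compat_sext0 hc x.2) := by
        funext i
        obtain ⟨i, hi⟩ := i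
        cases i with
        | inl a => rfl
        | inr i =>
          by_cases hlt : (i : ℕ) < k
          · apply Subtype.ext
            show (restr2 hc (dmap _ ⟨.inr i, hi⟩) : M)
              = (Fin.snoc xs (x : M) : Fin (k+1) → M) i
            simp only [dmap]
            simp only [hlt, ↓reduceDIte]
            rw [snoc_lt hlt]
            rfl
          · exact absurd hi (by rw [sext_inr_last s 0 hlt]; decide)
      rw [heq]
    have h0 : (BoundedFormula.relabel qmap t.1).ex.Realize (restr0 hc)
          (default : Fin 0 → ↥(lo B)) ↔
        ∃ x : ↥(lo B), t.1.Realize (restr0 (compat_sext0 hc x.2)) := by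
      rw [BoundedFormula.realize_ex]
      apply exists_congr
      intro x
      rw [BoundedFormula.realize_relabel]
      rw [realize_congr_fin0 _ _ _ (default : Fin 0 → _)]
      have heq : (Sum.elim (restr0 hc)
            ((Fin.snoc (default : Fin 0 → ↥(lo B)) x : Fin 1 → ↥(lo B)) ∘ Fin.castAdd 0) ∘ qmap)
          = restr0 (compat_sext0 hc x.2) := by
        funext i
        obtain ⟨i, hi⟩ := i
        cases i with
        | inl a => rfl
        | inr i =>
          by_cases hlt : (i : ℕ) < k
          · apply Subtype.ext
            show Subtype.val (Sum.elim _ _ (qmap ⟨Sum.inr i, hi⟩)) = _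
            simp only [qmap, hlt, ↓reduceDIte]
            simp only [Sum.elim_inl, restr0, Sum.elim_inr]
            rw [snoc_lt hlt]
            rfl
          · apply Subtype.ext
            show Subtype.val (Sum.elim _ _ (qmap ⟨Sum.inr i, hi⟩)) = _
            simp only [qmap, hlt, ↓reduceDIte]
            simp only [Sum.elim_inr, Function.comp_apply, restr0]
            rw [last_of_not_lt hlt]
            rw [show Fin.castAdd 0 (0 : Fin 1) = Fin.last 0 from rfl, Fin.snoc_last,
              Fin.snoc_last]
      rw [heq]
      exact Iff.rfl
    unfold exT0 TRe
    constructor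
    · rintro ⟨ha, hb, hcc⟩
      obtain ⟨x, hx⟩ := h0.1 ha
      exact ⟨x, hx, (h1 x).1 hb, (h2 x).1 hcc⟩
    · rintro ⟨x, hx, hb, hcc⟩
      exact ⟨h0.2 ⟨x, hx⟩, (h1 x).2 hb, (h2 x).2 hcc⟩
  constructor
  · rintro ⟨t, ht, h⟩
    simp only [List.mem_map] at ht
    obtain ⟨t', ht', rfl⟩ := ht
    obtain ⟨x, hx⟩ := (key t').1 h
    exact ⟨x, t', ht', hx⟩
  · rintro ⟨x, t', ht', h⟩
    exact ⟨exT0 t', List.mem_map_of_mem ht', (key t').2 ⟨x, h⟩⟩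

end Ext

end CLOAux
namespace CLOAux

section Ext2

variable {ι M : Type} [LinearOrder M] {c : ι → Set M} {B : Set M}
variable {α : Type} {k : ℕ}
variable {v : α → M} {xs : Fin k → M}

lemma compat_sext1 {s : α ⊕ Fin k → Fin 3} (hc : Compat B s (Sum.elim v xs)) {xv : M}
    (hx : xv ∈ B) : Compat B (sext s 1) (Sum.elim v (Fin.snoc xs xv)) := by
  intro i
  cases i with
  | inl a => exact hc (.inl a)
  | inr i =>
    by_cases hlt : (i : ℕ) < k
    · simp only [Sum.elim_inr, snoc_lt hlt, sext_inr_lt s 1 hlt]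
      exact hc (.inr ⟨i, hlt⟩)
    · have hi := last_of_not_lt hlt
      subst hi
      simp only [Sum.elim_inr, Fin.snoc_last,
        sext_inr_last s 1 (show ¬ ((Fin.last k : Fin (k+1)) : ℕ) < k by simp)]
      exact ⟨fun h => absurd h (by decide), fun _ => hx, fun h => absurd h (by decide)⟩

lemma compat_sext2 {s : α ⊕ Fin k → Fin 3} (hc : Compat B s (Sum.elim v xs)) {xv : M}
    (hx : xv ∈ up B) : Compat B (sext s 2) (Sum.elim v (Fin.snoc xs xv)) := by
  intro i
  cases i with
  | inl a => exact hc (.inl a)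
  | inr i =>
    by_cases hlt : (i : ℕ) < k
    · simp only [Sum.elim_inr, snoc_lt hlt, sext_inr_lt s 2 hlt]
      exact hc (.inr ⟨i, hlt⟩)
    · have hi := last_of_not_lt hlt
      subst hi
      simp only [Sum.elim_inr, Fin.snoc_last,
        sext_inr_last s 2 (show ¬ ((Fin.last k : Fin (k+1)) : ℕ) < k by simp)]
      exact ⟨fun h => absurd h (by decide), fun h => absurd h (by decide), fun _ => hx⟩

def exT1 {s : α ⊕ Fin k → Fin 3}
    (t : Tr (CLOLang ι) (Vs (sext s 1) 0) (Vs (sext s 1) 1) (Vs (sext s 1) 2)) :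
    Tr (CLOLang ι) (Vs s 0) (Vs s 1) (Vs s 2) :=
  (t.1.relabel (dmap (by decide)),
    (BoundedFormula.relabel qmap t.2.1).ex,
    t.2.2.relabel (dmap (by decide)))

def exT2 {s : α ⊕ Fin k → Fin 3}
    (t : Tr (CLOLang ι) (Vs (sext s 2) 0) (Vs (sext s 2) 1) (Vs (sext s 2) 2)) :
    Tr (CLOLang ι) (Vs s 0) (Vs s 1) (Vs s 2) :=
  (t.1.relabel (dmap (by decide)),
    t.2.1.relabel (dmap (by decide)),
    (BoundedFormula.relabel qmap t.2.2).ex)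

lemma lre_exL1 {s : α ⊕ Fin k → Fin 3} (hc : Compat B s (Sum.elim v xs))
    (l' : List (Tr (CLOLang ι) (Vs (sext s 1) 0) (Vs (sext s 1) 1) (Vs (sext s 1) 2))) :
    CLRe c (l'.map exT1) (restr0 hc) (restr1 hc) (restr2 hc) ↔
      ∃ x : ↥B, CLRe c l' (restr0 (compat_sext1 hc x.2))
        (restr1 (compat_sext1 hc x.2)) (restr2 (compat_sext1 hc x.2)) := by
  letI := CLOStr ι ↥(lo B) (subColor c (lo B))
  letI := CLOStr ι ↥B (subColor c B)
  letI := CLOStr ι ↥(up B) (subColor c (up B))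
  show LRe _ _ _ _ ↔ ∃ x : ↥B, LRe _ _ _ _
  have key : ∀ (t : Tr (CLOLang ι) (Vs (sext s 1) 0) (Vs (sext s 1) 1) (Vs (sext s 1) 2)),
      TRe (exT1 t) (restr0 hc) (restr1 hc) (restr2 hc) ↔
        ∃ x : ↥B, TRe t (restr0 (compat_sext1 hc x.2))
          (restr1 (compat_sext1 hc x.2)) (restr2 (compat_sext1 hc x.2)) := by
    intro t
    have h1 : ∀ x : ↥B,
        (t.1.relabel (dmap (show (1:Fin 3) ≠ 0 by decide))).Realize (restr0 hc) ↔
          t.1.Realize (restr0 (compat_sext1 hc x.2)) := by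
      intro x
      rw [Formula.realize_relabel]
      have heq : restr0 hc ∘ dmap (show (1 : Fin 3) ≠ 0 by decide)
          = restr0 (compat_sext1 hc x.2) := by
        funext i
        obtain ⟨i, hi⟩ := i
        cases i with
        | inl a => rfl
        | inr i =>
          by_cases hlt : (i : ℕ) < k
          · apply Subtype.ext
            show (restr0 hc (dmap _ ⟨.inr i, hi⟩) : M)
              = (Fin.snoc xs (x : M) : Fin (k+1) → M) i
            simp only [dmap]
            simp only [hlt, ↓reduceDIte]
            rw [snoc_lt hlt]
            rfl
          · exact absurd hi (by rw [sext_inr_last s 1 hlt]; decide)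
      rw [heq]
    have h2 : ∀ x : ↥B,
        (t.2.2.relabel (dmap (show (1:Fin 3) ≠ 2 by decide))).Realize (restr2 hc) ↔
          t.2.2.Realize (restr2 (compat_sext1 hc x.2)) := by
      intro x
      rw [Formula.realize_relabel]
      have heq : restr2 hc ∘ dmap (show (1 : Fin 3) ≠ 2 by decide)
          = restr2 (compat_sext1 hc x.2) := by
        funext i
        obtain ⟨i, hi⟩ := i
        cases i with
        | inl a => rfl
        | inr i =>
          by_cases hlt : (i : ℕ) < k
          · apply Subtype.ext
            show (restr2 hc (dmap _ ⟨.inr i, hi⟩) : M)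
              = (Fin.snoc xs (x : M) : Fin (k+1) → M) i
            simp only [dmap]
            simp only [hlt, ↓reduceDIte]
            rw [snoc_lt hlt]
            rfl
          · exact absurd hi (by rw [sext_inr_last s 1 hlt]; decide)
      rw [heq]
    have h0 : (BoundedFormula.relabel qmap t.2.1).ex.Realize (restr1 hc)
          (default : Fin 0 → ↥B) ↔
        ∃ x : ↥B, t.2.1.Realize (restr1 (compat_sext1 hc x.2)) := by
      rw [BoundedFormula.realize_ex]
      apply exists_congr
      intro x
      rw [BoundedFormula.realize_relabel]
      rw [realize_congr_fin0 _ _ _ (default : Fin 0 → _)]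
      have heq : (Sum.elim (restr1 hc)
            ((Fin.snoc (default : Fin 0 → ↥B) x : Fin 1 → ↥B) ∘ Fin.castAdd 0) ∘ qmap)
          = restr1 (compat_sext1 hc x.2) := by
        funext i
        obtain ⟨i, hi⟩ := i
        cases i with
        | inl a => rfl
        | inr i =>
          by_cases hlt : (i : ℕ) < k
          · apply Subtype.ext
            show Subtype.val (Sum.elim _ _ (qmap ⟨Sum.inr i, hi⟩)) = _
            simp only [qmap, hlt, ↓reduceDIte]
            simp only [Sum.elim_inl, restr1, Sum.elim_inr]
            rw [snoc_lt hlt]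
            rfl
          · apply Subtype.ext
            show Subtype.val (Sum.elim _ _ (qmap ⟨Sum.inr i, hi⟩)) = _
            simp only [qmap, hlt, ↓reduceDIte]
            simp only [Sum.elim_inr, Function.comp_apply, restr1]
            rw [last_of_not_lt hlt]
            rw [show Fin.castAdd 0 (0 : Fin 1) = Fin.last 0 from rfl, Fin.snoc_last,
              Fin.snoc_last]
      rw [heq]
      exact Iff.rfl
    unfold exT1 TRe
    constructor
    · rintro ⟨ha, hb, hcc⟩
      obtain ⟨x, hx⟩ := h0.1 hb
      exact ⟨x, (h1 x).1 ha, hx, (h2 x).1 hcc⟩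
    · rintro ⟨x, ha, hx, hcc⟩
      exact ⟨(h1 x).2 ha, h0.2 ⟨x, hx⟩, (h2 x).2 hcc⟩
  constructor
  · rintro ⟨t, ht, h⟩
    simp only [List.mem_map] at ht
    obtain ⟨t', ht', rfl⟩ := ht
    obtain ⟨x, hx⟩ := (key t').1 h
    exact ⟨x, t', ht', hx⟩
  · rintro ⟨x, t', ht', h⟩
    exact ⟨exT1 t', List.mem_map_of_mem ht', (key t').2 ⟨x, h⟩⟩

lemma lre_exL2 {s : α ⊕ Fin k → Fin 3} (hc : Compat B s (Sum.elim v xs))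
    (l' : List (Tr (CLOLang ι) (Vs (sext s 2) 0) (Vs (sext s 2) 1) (Vs (sext s 2) 2))) :
    CLRe c (l'.map exT2) (restr0 hc) (restr1 hc) (restr2 hc) ↔
      ∃ x : ↥(up B), CLRe c l' (restr0 (compat_sext2 hc x.2))
        (restr1 (compat_sext2 hc x.2)) (restr2 (compat_sext2 hc x.2)) := by
  letI := CLOStr ι ↥(lo B) (subColor c (lo B))
  letI := CLOStr ι ↥B (subColor c B)
  letI := CLOStr ι ↥(up B) (subColor c (up B))
  show LRe _ _ _ _ ↔ ∃ x : ↥(up B), LRe _ _ _ _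
  have key : ∀ (t : Tr (CLOLang ι) (Vs (sext s 2) 0) (Vs (sext s 2) 1) (Vs (sext s 2) 2)),
      TRe (exT2 t) (restr0 hc) (restr1 hc) (restr2 hc) ↔
        ∃ x : ↥(up B), TRe t (restr0 (compat_sext2 hc x.2))
          (restr1 (compat_sext2 hc x.2)) (restr2 (compat_sext2 hc x.2)) := by
    intro t
    have h1 : ∀ x : ↥(up B),
        (t.1.relabel (dmap (show (2:Fin 3) ≠ 0 by decide))).Realize (restr0 hc) ↔
          t.1.Realize (restr0 (compat_sext2 hc x.2)) := by
      intro x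
      rw [Formula.realize_relabel]
      have heq : restr0 hc ∘ dmap (show (2 : Fin 3) ≠ 0 by decide)
          = restr0 (compat_sext2 hc x.2) := by
        funext i
        obtain ⟨i, hi⟩ := i
        cases i with
        | inl a => rfl
        | inr i =>
          by_cases hlt : (i : ℕ) < k
          · apply Subtype.ext
            show (restr0 hc (dmap _ ⟨.inr i, hi⟩) : M)
              = (Fin.snoc xs (x : M) : Fin (k+1) → M) i
            simp only [dmap]
            simp only [hlt, ↓reduceDIte]
            rw [snoc_lt hlt]
            rfl
          · exact absurd hi (by rw [sext_inr_last s 2 hlt]; decide)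
      rw [heq]
    have h2 : ∀ x : ↥(up B),
        (t.2.1.relabel (dmap (show (2:Fin 3) ≠ 1 by decide))).Realize (restr1 hc) ↔
          t.2.1.Realize (restr1 (compat_sext2 hc x.2)) := by
      intro x
      rw [Formula.realize_relabel]
      have heq : restr1 hc ∘ dmap (show (2 : Fin 3) ≠ 1 by decide)
          = restr1 (compat_sext2 hc x.2) := by
        funext i
        obtain ⟨i, hi⟩ := i
        cases i with
        | inl a => rfl
        | inr i =>
          by_cases hlt : (i : ℕ) < k
          · apply Subtype.ext
            show (restr1 hc (dmap _ ⟨.inr i, hi⟩) : M)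
              = (Fin.snoc xs (x : M) : Fin (k+1) → M) i
            simp only [dmap]
            simp only [hlt, ↓reduceDIte]
            rw [snoc_lt hlt]
            rfl
          · exact absurd hi (by rw [sext_inr_last s 2 hlt]; decide)
      rw [heq]
    have h0 : (BoundedFormula.relabel qmap t.2.2).ex.Realize (restr2 hc)
          (default : Fin 0 → ↥(up B)) ↔
        ∃ x : ↥(up B), t.2.2.Realize (restr2 (compat_sext2 hc x.2)) := by
      rw [BoundedFormula.realize_ex]
      apply exists_congr
      intro x
      rw [BoundedFormula.realize_relabel]
      rw [realize_congr_fin0 _ _ _ (default : Fin 0 → _)]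
      have heq : (Sum.elim (restr2 hc)
            ((Fin.snoc (default : Fin 0 → ↥(up B)) x : Fin 1 → ↥(up B)) ∘ Fin.castAdd 0) ∘ qmap)
          = restr2 (compat_sext2 hc x.2) := by
        funext i
        obtain ⟨i, hi⟩ := i
        cases i with
        | inl a => rfl
        | inr i =>
          by_cases hlt : (i : ℕ) < k
          · apply Subtype.ext
            show Subtype.val (Sum.elim _ _ (qmap ⟨Sum.inr i, hi⟩)) = _
            simp only [qmap, hlt, ↓reduceDIte]
            simp only [Sum.elim_inl, restr2, Sum.elim_inr]
            rw [snoc_lt hlt]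
            rfl
          · apply Subtype.ext
            show Subtype.val (Sum.elim _ _ (qmap ⟨Sum.inr i, hi⟩)) = _
            simp only [qmap, hlt, ↓reduceDIte]
            simp only [Sum.elim_inr, Function.comp_apply, restr2]
            rw [last_of_not_lt hlt]
            rw [show Fin.castAdd 0 (0 : Fin 1) = Fin.last 0 from rfl, Fin.snoc_last,
              Fin.snoc_last]
      rw [heq]
      exact Iff.rfl
    unfold exT2 TRe
    constructor
    · rintro ⟨ha, hb, hcc⟩
      obtain ⟨x, hx⟩ := h0.1 hcc
      exact ⟨x, (h1 x).1 ha, (h2 x).1 hb, hx⟩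
    · rintro ⟨x, ha, hb, hx⟩
      exact ⟨(h1 x).2 ha, (h2 x).2 hb, h0.2 ⟨x, hx⟩⟩
  constructor
  · rintro ⟨t, ht, h⟩
    simp only [List.mem_map] at ht
    obtain ⟨t', ht', rfl⟩ := ht
    obtain ⟨x, hx⟩ := (key t').1 h
    exact ⟨x, t', ht', hx⟩
  · rintro ⟨x, t', ht', h⟩
    exact ⟨exT2 t', List.mem_map_of_mem ht', (key t').2 ⟨x, h⟩⟩

end Ext2

end CLOAux
namespace CLOAux

section Main

variable {ι M : Type} [LinearOrder M] (c : ι → Set M) {B : Set M}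

lemma fin3 : ∀ j : Fin 3, j = 0 ∨ j = 1 ∨ j = 2 := by decide

lemma lt_of_sorts (hne : B.Nonempty) {x y : M} {j₁ j₂ : Fin 3} (hj : j₁ < j₂)
    (hx0 : j₁ = 0 → x ∈ lo B) (hx1 : j₁ = 1 → x ∈ B) (hx2 : j₁ = 2 → x ∈ up B)
    (hy0 : j₂ = 0 → y ∈ lo B) (hy1 : j₂ = 1 → y ∈ B) (hy2 : j₂ = 2 → y ∈ up B) :
    x < y := by
  clear hx2 hy0
  rcases fin3 j₁ with h1 | h1 | h1 <;> rcases fin3 j₂ with h2 | h2 | h2 <;>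
      subst h1 <;> subst h2 <;>
    first
      | exact absurd hj (by decide)
      | exact lo_lt_mem (hx0 rfl) (hy1 rfl)
      | exact lo_lt_up hne (hx0 rfl) (hy2 rfl)
      | exact mem_lt_up (hx1 rfl) (hy2 rfl)

variable {γ₀ γ₁ γ₂ : Type}

lemma clre_nil {u₀ : γ₀ → ↥(lo B)} {u₁ : γ₁ → ↥B} {u₂ : γ₂ → ↥(up B)} :
    CLRe c ([] : List (Tr (CLOLang ι) γ₀ γ₁ γ₂)) u₀ u₁ u₂ ↔ False := by
  letI := CLOStr ι ↥(lo B) (subColor c (lo B))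
  letI := CLOStr ι ↥B (subColor c B)
  letI := CLOStr ι ↥(up B) (subColor c (up B))
  show LRe _ _ _ _ ↔ False
  simp [LRe]

lemma clre_append {l₁ l₂ : List (Tr (CLOLang ι) γ₀ γ₁ γ₂)}
    {u₀ : γ₀ → ↥(lo B)} {u₁ : γ₁ → ↥B} {u₂ : γ₂ → ↥(up B)} :
    CLRe c (l₁ ++ l₂) u₀ u₁ u₂ ↔ CLRe c l₁ u₀ u₁ u₂ ∨ CLRe c l₂ u₀ u₁ u₂ := by
  letI := CLOStr ι ↥(lo B) (subColor c (lo B))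
  letI := CLOStr ι ↥B (subColor c B)
  letI := CLOStr ι ↥(up B) (subColor c (up B))
  exact lre_append

lemma clre_negL {l : List (Tr (CLOLang ι) γ₀ γ₁ γ₂)}
    {u₀ : γ₀ → ↥(lo B)} {u₁ : γ₁ → ↥B} {u₂ : γ₂ → ↥(up B)} :
    CLRe c (negL l) u₀ u₁ u₂ ↔ ¬ CLRe c l u₀ u₁ u₂ := by
  letI := CLOStr ι ↥(lo B) (subColor c (lo B))
  letI := CLOStr ι ↥B (subColor c B)
  letI := CLOStr ι ↥(up B) (subColor c (up B))
  exact lre_negL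

lemma clre_singleton {f₀ : (CLOLang ι).Formula γ₀} {f₁ : (CLOLang ι).Formula γ₁}
    {f₂ : (CLOLang ι).Formula γ₂}
    {u₀ : γ₀ → ↥(lo B)} {u₁ : γ₁ → ↥B} {u₂ : γ₂ → ↥(up B)} :
    CLRe c [(f₀, f₁, f₂)] u₀ u₁ u₂ ↔
      Sat ↥(lo B) (subColor c (lo B)) f₀ u₀ ∧ Sat ↥B (subColor c B) f₁ u₁ ∧
        Sat ↥(up B) (subColor c (up B)) f₂ u₂ := by
  letI := CLOStr ι ↥(lo B) (subColor c (lo B))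
  letI := CLOStr ι ↥B (subColor c B)
  letI := CLOStr ι ↥(up B) (subColor c (up B))
  show LRe _ _ _ _ ↔ _
  simp only [LRe, TRe, List.mem_singleton, exists_eq_left]
  exact Iff.rfl

lemma sat_top {X : Type} [LinearOrder X] (cX : ι → Set X) {γ : Type} (u : γ → X) :
    Sat X cX (⊤ : (CLOLang ι).Formula γ) u ↔ True := by
  letI := CLOStr ι X cX
  exact Formula.realize_top

theorem main (hB : B.OrdConnected) (hne : B.Nonempty) {α : Type} :
    ∀ {k : ℕ} (φ : (CLOLang ι).BoundedFormula α k) (s : α ⊕ Fin k → Fin 3),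
      ∃ l, GoodFor c B φ s l := by
  intro k φ
  induction φ with
  | falsum =>
    intro s
    refine ⟨[], fun v xs hc => ?_⟩
    rw [clre_nil]
    letI := CLOStr ι M c
    show False ↔ False
    rfl
  | equal t₁ t₂ =>
    intro s
    obtain ⟨i₁, rfl⟩ := term_var t₁
    obtain ⟨i₂, rfl⟩ := term_var t₂
    by_cases hss : s i₁ = s i₂
    · rcases fin3 (s i₂) with h2 | h2 | h2
      · refine ⟨[((Term.var ⟨i₁, hss.trans h2⟩).equal (Term.var ⟨i₂, h2⟩), ⊤, ⊤)],
          fun v xs hc => ?_⟩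
        rw [clre_singleton, sat_top, sat_top]
        letI := CLOStr ι M c
        show Sum.elim v xs i₁ = Sum.elim v xs i₂ ↔ _
        constructor
        · intro h
          exact ⟨Subtype.ext h, trivial, trivial⟩
        · rintro ⟨h, -, -⟩
          exact congrArg Subtype.val h
      · refine ⟨[(⊤, (Term.var ⟨i₁, hss.trans h2⟩).equal (Term.var ⟨i₂, h2⟩), ⊤)],
          fun v xs hc => ?_⟩
        rw [clre_singleton, sat_top, sat_top]
        letI := CLOStr ι M c
        show Sum.elim v xs i₁ = Sum.elim v xs i₂ ↔ _
        constructor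
        · intro h
          exact ⟨trivial, Subtype.ext h, trivial⟩
        · rintro ⟨-, h, -⟩
          exact congrArg Subtype.val h
      · refine ⟨[(⊤, ⊤, (Term.var ⟨i₁, hss.trans h2⟩).equal (Term.var ⟨i₂, h2⟩))],
          fun v xs hc => ?_⟩
        rw [clre_singleton, sat_top, sat_top]
        letI := CLOStr ι M c
        show Sum.elim v xs i₁ = Sum.elim v xs i₂ ↔ _
        constructor
        · intro h
          exact ⟨trivial, trivial, Subtype.ext h⟩
        · rintro ⟨-, -, h⟩
          exact congrArg Subtype.val h
    · refine ⟨[], fun v xs hc => ?_⟩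
      rw [clre_nil]
      letI := CLOStr ι M c
      show Sum.elim v xs i₁ = Sum.elim v xs i₂ ↔ False
      simp only [iff_false]
      rcases lt_trichotomy (s i₁) (s i₂) with hlt | heq | hlt
      · exact ne_of_lt (lt_of_sorts hne hlt (hc i₁).1 (hc i₁).2.1 (hc i₁).2.2
          (hc i₂).1 (hc i₂).2.1 (hc i₂).2.2)
      · exact absurd heq hss
      · exact (ne_of_lt (lt_of_sorts hne hlt (hc i₂).1 (hc i₂).2.1 (hc i₂).2.2
          (hc i₁).1 (hc i₁).2.1 (hc i₁).2.2)).symm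
  | @rel n l R ts =>
    intro s
    cases R with
    | lt =>
      obtain ⟨i₁, h1eq⟩ := term_var (ts 0)
      obtain ⟨i₂, h2eq⟩ := term_var (ts 1)
      have hshow : ∀ (v : α → M) (xs : Fin n → M),
          (letI := CLOStr ι M c;
            (BoundedFormula.rel CLORel.lt ts).Realize v xs) ↔
            Sum.elim v xs i₁ < Sum.elim v xs i₂ := by
        intro v xs
        letI := CLOStr ι M c
        show Term.realize (Sum.elim v xs) (ts 0) < Term.realize (Sum.elim v xs) (ts 1) ↔ _
        rw [h1eq, h2eq]
        exact Iff.rfl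
      by_cases hss : s i₁ = s i₂
      · rcases fin3 (s i₂) with h2 | h2 | h2
        · refine ⟨[(BoundedFormula.rel CLORel.lt
              ![Term.var (.inl ⟨i₁, hss.trans h2⟩), Term.var (.inl ⟨i₂, h2⟩)], ⊤, ⊤)],
            fun v xs hc => ?_⟩
          rw [clre_singleton, sat_top, sat_top, hshow]
          constructor
          · intro h
            exact ⟨h, trivial, trivial⟩
          · rintro ⟨h, -, -⟩
            exact h
        · refine ⟨[(⊤, BoundedFormula.rel CLORel.lt
              ![Term.var (.inl ⟨i₁, hss.trans h2⟩), Term.var (.inl ⟨i₂, h2⟩)], ⊤)],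
            fun v xs hc => ?_⟩
          rw [clre_singleton, sat_top, sat_top, hshow]
          constructor
          · intro h
            exact ⟨trivial, h, trivial⟩
          · rintro ⟨-, h, -⟩
            exact h
        · refine ⟨[(⊤, ⊤, BoundedFormula.rel CLORel.lt
              ![Term.var (.inl ⟨i₁, hss.trans h2⟩), Term.var (.inl ⟨i₂, h2⟩)])],
            fun v xs hc => ?_⟩
          rw [clre_singleton, sat_top, sat_top, hshow]
          constructor
          · intro h
            exact ⟨trivial, trivial, h⟩
          · rintro ⟨-, -, h⟩
            exact h
      · rcases lt_trichotomy (s i₁) (s i₂) with hlt | heq | hlt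
        · refine ⟨[(⊤, ⊤, ⊤)], fun v xs hc => ?_⟩
          rw [clre_singleton, sat_top, sat_top, sat_top, hshow]
          simp only [and_self, iff_true]
          exact lt_of_sorts hne hlt (hc i₁).1 (hc i₁).2.1 (hc i₁).2.2
            (hc i₂).1 (hc i₂).2.1 (hc i₂).2.2
        · exact absurd heq hss
        · refine ⟨[], fun v xs hc => ?_⟩
          rw [clre_nil, hshow]
          simp only [iff_false, not_lt]
          exact le_of_lt (lt_of_sorts hne hlt (hc i₂).1 (hc i₂).2.1 (hc i₂).2.2
            (hc i₁).1 (hc i₁).2.1 (hc i₁).2.2)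
    | color ci =>
      obtain ⟨i₁, h1eq⟩ := term_var (ts 0)
      have hshow : ∀ (v : α → M) (xs : Fin n → M),
          (letI := CLOStr ι M c;
            (BoundedFormula.rel (CLORel.color ci) ts).Realize v xs) ↔
            Sum.elim v xs i₁ ∈ c ci := by
        intro v xs
        letI := CLOStr ι M c
        show Term.realize (Sum.elim v xs) (ts 0) ∈ c ci ↔ _
        rw [h1eq]
        exact Iff.rfl
      rcases fin3 (s i₁) with h2 | h2 | h2
      · refine ⟨[(BoundedFormula.rel (CLORel.color ci) ![Term.var (.inl ⟨i₁, h2⟩)], ⊤, ⊤)],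
          fun v xs hc => ?_⟩
        rw [clre_singleton, sat_top, sat_top, hshow]
        exact ⟨fun h => ⟨h, trivial, trivial⟩, fun ⟨h, _, _⟩ => h⟩
      · refine ⟨[(⊤, BoundedFormula.rel (CLORel.color ci) ![Term.var (.inl ⟨i₁, h2⟩)], ⊤)],
          fun v xs hc => ?_⟩
        rw [clre_singleton, sat_top, sat_top, hshow]
        exact ⟨fun h => ⟨trivial, h, trivial⟩, fun ⟨_, h, _⟩ => h⟩
      · refine ⟨[(⊤, ⊤, BoundedFormula.rel (CLORel.color ci) ![Term.var (.inl ⟨i₁, h2⟩)])],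
          fun v xs hc => ?_⟩
        rw [clre_singleton, sat_top, sat_top, hshow]
        exact ⟨fun h => ⟨trivial, trivial, h⟩, fun ⟨_, _, h⟩ => h⟩
  | imp φ₁ φ₂ ih₁ ih₂ =>
    intro s
    obtain ⟨l₁, h₁⟩ := ih₁ s
    obtain ⟨l₂, h₂⟩ := ih₂ s
    refine ⟨negL l₁ ++ l₂, fun v xs hc => ?_⟩
    have H1 := h₁ v xs hc
    have H2 := h₂ v xs hc
    rw [clre_append, clre_negL]
    letI := CLOStr ι M c
    show (φ₁.Realize v xs → φ₂.Realize v xs) ↔ _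
    constructor
    · intro himp
      by_cases hr : CLRe c l₁ (restr0 hc) (restr1 hc) (restr2 hc)
      · exact Or.inr (H2.1 (himp (H1.2 hr)))
      · exact Or.inl hr
    · rintro (h | h) h1
      · exact absurd (H1.1 h1) h
      · exact H2.2 h
  | all φ' ih =>
    intro s
    obtain ⟨l0, h0⟩ := ih (sext s 0)
    obtain ⟨l1, h1⟩ := ih (sext s 1)
    obtain ⟨l2, h2⟩ := ih (sext s 2)
    refine ⟨negL ((negL l0).map exT0 ++ ((negL l1).map exT1 ++ (negL l2).map exT2)),
      fun v xs hc => ?_⟩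
    rw [clre_negL, clre_append, clre_append, lre_exL0 hc, lre_exL1 hc, lre_exL2 hc]
    letI := CLOStr ι M c
    have hA : ∀ x : ↥(lo B),
        CLRe c (negL l0) (restr0 (compat_sext0 hc x.2)) (restr1 (compat_sext0 hc x.2))
          (restr2 (compat_sext0 hc x.2)) ↔ ¬ φ'.Realize v (Fin.snoc xs (x : M)) := by
      intro x
      rw [clre_negL]
      exact not_congr (h0 v (Fin.snoc xs (x : M)) (compat_sext0 hc x.2)).symm
    have hBB : ∀ x : ↥B,
        CLRe c (negL l1) (restr0 (compat_sext1 hc x.2)) (restr1 (compat_sext1 hc x.2))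
          (restr2 (compat_sext1 hc x.2)) ↔ ¬ φ'.Realize v (Fin.snoc xs (x : M)) := by
      intro x
      rw [clre_negL]
      exact not_congr (h1 v (Fin.snoc xs (x : M)) (compat_sext1 hc x.2)).symm
    have hC : ∀ x : ↥(up B),
        CLRe c (negL l2) (restr0 (compat_sext2 hc x.2)) (restr1 (compat_sext2 hc x.2))
          (restr2 (compat_sext2 hc x.2)) ↔ ¬ φ'.Realize v (Fin.snoc xs (x : M)) := by
      intro x
      rw [clre_negL]
      exact not_congr (h2 v (Fin.snoc xs (x : M)) (compat_sext2 hc x.2)).symm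
    show (∀ x : M, φ'.Realize v (Fin.snoc xs x)) ↔ _
    constructor
    · intro hAll
      rintro (⟨x, hx⟩ | ⟨x, hx⟩ | ⟨x, hx⟩)
      · exact (hA x).1 hx (hAll (x : M))
      · exact (hBB x).1 hx (hAll (x : M))
      · exact (hC x).1 hx (hAll (x : M))
    · intro hN x
      rcases part_tri hB x with hx | hx | hx
      · by_contra hR
        exact hN (Or.inl ⟨⟨x, hx⟩, (hA ⟨x, hx⟩).2 hR⟩)
      · by_contra hR
        exact hN (Or.inr (Or.inl ⟨⟨x, hx⟩, (hBB ⟨x, hx⟩).2 hR⟩))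
      · by_contra hR
        exact hN (Or.inr (Or.inr ⟨⟨x, hx⟩, (hC ⟨x, hx⟩).2 hR⟩))

end Main

end CLOAux
namespace CLOAux

def disjL {L : Language} {γ : Type} (l : List (L.Formula γ)) : L.Formula γ :=
  l.foldr (· ⊔ ·) ⊥

lemma realize_disjL {L : Language} {N : Type} [L.Structure N] {γ : Type}
    (l : List (L.Formula γ)) (u : γ → N) :
    (disjL l).Realize u ↔ ∃ θ ∈ l, θ.Realize u := by
  induction l with
  | nil => simp [disjL, Formula.realize_bot]
  | cons θ l ih =>
    have hfold : disjL (θ :: l) = θ ⊔ disjL l := rfl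
    rw [hfold, Formula.realize_sup, ih]
    simp [List.mem_cons, or_and_right, exists_or]

lemma sat_bot {ι : Type} {X : Type} [LinearOrder X] (cX : ι → Set X) {γ : Type} (u : γ → X) :
    Sat X cX (⊥ : (CLOLang ι).Formula γ) u ↔ False := by
  letI := CLOStr ι X cX
  exact Formula.realize_bot

section Assemble

variable {M : Type} [LinearOrder M]

open Classical in
noncomputable def sortOf (n : ℕ) {m : ℕ} (B : Set M) (a : Fin m → M) :
    (Fin n ⊕ Fin m) ⊕ Fin 0 → Fin 3 :=
  fun i => match i with
  | .inl (.inl _) => 1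
  | .inl (.inr j) => if a j ∈ lo B then 0 else 2
  | .inr i0 => i0.elim0

noncomputable def u0fix (n : ℕ) {m : ℕ} (B : Set M) (a : Fin m → M) :
    Vs (sortOf n B a) 0 → ↥(lo B) :=
  fun i => match i with
  | ⟨.inl (.inl _), h⟩ => absurd (show (1 : Fin 3) = 0 from h) (by decide)
  | ⟨.inl (.inr j), h⟩ => ⟨a j, by
      by_cases hm : a j ∈ lo B
      · exact hm
      · exact absurd h (by
          rw [show sortOf n B a (.inl (.inr j)) = 2 from if_neg hm]
          decide)⟩
  | ⟨.inr i0, _⟩ => i0.elim0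

noncomputable def u2fix (n : ℕ) {m : ℕ} {B : Set M} (hB : B.OrdConnected) (a : Fin m → M)
    (ha : ∀ j, a j ∉ B) : Vs (sortOf n B a) 2 → ↥(up B) :=
  fun i => match i with
  | ⟨.inl (.inl _), h⟩ => absurd (show (1 : Fin 3) = 2 from h) (by decide)
  | ⟨.inl (.inr j), h⟩ => ⟨a j, by
      by_cases hm : a j ∈ lo B
      · exact absurd h (by
          rw [show sortOf n B a (.inl (.inr j)) = 0 from if_pos hm]
          decide)
      · rcases part_tri hB (a j) with h' | h' | h'
        · exact absurd h' hm
        · exact absurd h' (ha j)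
        · exact h'⟩
  | ⟨.inr i0, _⟩ => i0.elim0

noncomputable def rmap (n : ℕ) {m : ℕ} (B : Set M) (a : Fin m → M) :
    Vs (sortOf n B a) 1 → Fin n :=
  fun i => match i with
  | ⟨.inl (.inl i0), _⟩ => i0
  | ⟨.inl (.inr j), h⟩ => False.elim (by
      by_cases hm : a j ∈ lo B
      · rw [show sortOf n B a (.inl (.inr j)) = 0 from if_pos hm] at h
        exact absurd h (by decide)
      · rw [show sortOf n B a (.inl (.inr j)) = 2 from if_neg hm] at h
        exact absurd h (by decide))
  | ⟨.inr i0, _⟩ => i0.elim0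

end Assemble

end CLOAux

theorem stmt0 {ι : Type} [Countable ι] {M : Type} [LinearOrder M] (c : ι → Set M)
    (B : Set M) (hB : B.OrdConnected) {n m : ℕ}
    (φ : (CLOLang ι).Formula (Fin n ⊕ Fin m)) (a : Fin m → M) (ha : ∀ j, a j ∉ B) :
    ∃ ψ : (CLOLang ι).Formula (Fin n), ∀ b : Fin n → B,
      Sat (↥B) (subColor c B) ψ b ↔ Sat M c φ (Sum.elim (fun i => (b i : M)) a) := by
  classical
  by_cases hBne : B.Nonempty
  · -- B nonempty: use the composition theorem
    obtain ⟨l, hGood⟩ := CLOAux.main c hB hBne (k := 0) φ (CLOAux.sortOf n B a)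
    refine ⟨CLOAux.disjL ((l.filter (fun t => decide
        (Sat ↥(CLOAux.lo B) (subColor c (CLOAux.lo B)) t.1 (CLOAux.u0fix n B a) ∧
         Sat ↥(CLOAux.up B) (subColor c (CLOAux.up B)) t.2.2
           (CLOAux.u2fix n hB a ha)))).map
        (fun t => t.2.1.relabel (CLOAux.rmap n B a))), ?_⟩
    intro b
    have hcomp : CLOAux.Compat B (CLOAux.sortOf n B a)
        (Sum.elim (Sum.elim (fun i => (b i : M)) a) (default : Fin 0 → M)) := by
      intro i
      rcases i with (i0 | j) | i0
      · exact ⟨fun h => absurd (show (1 : Fin 3) = 0 from h) (by decide),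
          fun _ => (b i0).2, fun h => absurd (show (1 : Fin 3) = 2 from h) (by decide)⟩
      · by_cases hm : a j ∈ CLOAux.lo B
        · refine ⟨fun _ => hm, fun h => ?_, fun h => ?_⟩
          · rw [show CLOAux.sortOf n B a (.inl (.inr j)) = 0 from if_pos hm] at h
            exact absurd h (by decide)
          · rw [show CLOAux.sortOf n B a (.inl (.inr j)) = 0 from if_pos hm] at h
            exact absurd h (by decide)
        · have hup : a j ∈ CLOAux.up B := by
            rcases CLOAux.part_tri hB (a j) with h' | h' | h'
            · exact absurd h' hm
            · exact absurd h' (ha j)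
            · exact h'
          refine ⟨fun h => ?_, fun h => ?_, fun _ => hup⟩
          · rw [show CLOAux.sortOf n B a (.inl (.inr j)) = 2 from if_neg hm] at h
            exact absurd h (by decide)
          · rw [show CLOAux.sortOf n B a (.inl (.inr j)) = 2 from if_neg hm] at h
            exact absurd h (by decide)
      · exact i0.elim0
    have H := hGood (Sum.elim (fun i => (b i : M)) a) default hcomp
    have hr0 : CLOAux.restr0 hcomp = CLOAux.u0fix n B a := by
      funext i
      obtain ⟨i, hi⟩ := i
      rcases i with (i0 | j) | i0
      · exact absurd (show (1 : Fin 3) = 0 from hi) (by decide)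
      · apply Subtype.ext
        rfl
      · exact i0.elim0
    have hr2 : CLOAux.restr2 hcomp = CLOAux.u2fix n hB a ha := by
      funext i
      obtain ⟨i, hi⟩ := i
      rcases i with (i0 | j) | i0
      · exact absurd (show (1 : Fin 3) = 2 from hi) (by decide)
      · apply Subtype.ext
        rfl
      · exact i0.elim0
    have hr1 : CLOAux.restr1 hcomp = b ∘ CLOAux.rmap n B a := by
      funext i
      obtain ⟨i, hi⟩ := i
      rcases i with (i0 | j) | i0
      · apply Subtype.ext
        rfl
      · exfalso
        by_cases hm : a j ∈ CLOAux.lo B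
        · rw [show CLOAux.sortOf n B a (.inl (.inr j)) = 0 from if_pos hm] at hi
          exact absurd hi (by decide)
        · rw [show CLOAux.sortOf n B a (.inl (.inr j)) = 2 from if_neg hm] at hi
          exact absurd hi (by decide)
      · exact i0.elim0
    have hmain : CLOAux.CLRe c l (CLOAux.u0fix n B a) (b ∘ CLOAux.rmap n B a)
        (CLOAux.u2fix n hB a ha) ↔ Sat M c φ (Sum.elim (fun i => (b i : M)) a) := by
      rw [← hr0, ← hr1, ← hr2]
      exact H.symm
    rw [← hmain]
    letI := CLOStr ι ↥(CLOAux.lo B) (subColor c (CLOAux.lo B))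
    letI := CLOStr ι ↥B (subColor c B)
    letI := CLOStr ι ↥(CLOAux.up B) (subColor c (CLOAux.up B))
    show (CLOAux.disjL _).Realize b ↔ CLOAux.LRe l (CLOAux.u0fix n B a)
      (b ∘ CLOAux.rmap n B a) (CLOAux.u2fix n hB a ha)
    rw [CLOAux.realize_disjL]
    constructor
    · rintro ⟨θ, hθ, hre⟩
      simp only [List.mem_map, List.mem_filter] at hθ
      obtain ⟨t, ⟨htl, hdec⟩, rfl⟩ := hθ
      rw [decide_eq_true_eq] at hdec
      refine ⟨t, htl, hdec.1, ?_, hdec.2⟩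
      rw [Formula.realize_relabel] at hre
      exact hre
    · rintro ⟨t, htl, h0, h1, h2⟩
      refine ⟨t.2.1.relabel (CLOAux.rmap n B a), ?_, ?_⟩
      · simp only [List.mem_map, List.mem_filter]
        exact ⟨t, ⟨htl, decide_eq_true ⟨h0, h2⟩⟩, rfl⟩
      · rw [Formula.realize_relabel]
        exact h1
  · -- B empty
    have hBe : B = ∅ := Set.not_nonempty_iff_eq_empty.1 hBne
    cases n with
    | zero =>
      by_cases hφ : Sat M c φ (Sum.elim (fun i : Fin 0 => (Fin.elim0 i : M)) a)
      · refine ⟨⊤, fun b => ?_⟩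
        have hbeq : (fun i => ((b i : M))) = (fun i : Fin 0 => (Fin.elim0 i : M)) :=
          funext fun i => i.elim0
        constructor
        · intro _
          rw [hbeq]
          exact hφ
        · intro _
          exact (CLOAux.sat_top (subColor c B) b).2 trivial
      · refine ⟨⊥, fun b => ?_⟩
        have hbeq : (fun i => ((b i : M))) = (fun i : Fin 0 => (Fin.elim0 i : M)) :=
          funext fun i => i.elim0
        constructor
        · intro h
          exact ((CLOAux.sat_bot (subColor c B) b).1 h).elim
        · intro h
          rw [hbeq] at h
          exact absurd h hφ
    | succ n' =>
      refine ⟨⊤, fun b => ?_⟩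
      exact (Set.notMem_empty ((b 0 : M)) (hBe ▸ (b 0).2)).elim
end

section
/- Let (I,<) be a linear order and, for each i ∈ I, let A_i and B_i be CLOs in the same language L_κ with A_i elementarily equivalent to B_i. Then Σ_{i∈I} A_i is elementarily equivalent to Σ_{i∈I} B_i. -/
open FirstOrder Language Set

section EF

open FirstOrder.Language.BoundedFormula

variable {ι : Type}

/-- Realization of a bounded formula over `Empty` in a colored linear order. -/
def EFRz {M : Type} [LinearOrder M] (c : ι → Set M) {k : ℕ}
    (φ : (CLOLang ι).BoundedFormula Empty k) (xs : Fin k → M) : Prop :=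
  letI := CLOStr ι M c
  φ.Realize (fun e => e.elim) xs

def EFlt {k : ℕ} (j j' : Fin k) : (CLOLang ι).BoundedFormula Empty k :=
  BoundedFormula.rel CLORel.lt ![Term.var (Sum.inr j), Term.var (Sum.inr j')]

def EFeq {k : ℕ} (j j' : Fin k) : (CLOLang ι).BoundedFormula Empty k :=
  BoundedFormula.equal (Term.var (Sum.inr j)) (Term.var (Sum.inr j'))

def EFcol {k : ℕ} (s : ι) (j : Fin k) : (CLOLang ι).BoundedFormula Empty k :=
  BoundedFormula.rel (CLORel.color s) ![Term.var (Sum.inr j)]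

variable {M : Type} [LinearOrder M] {c : ι → Set M} {k : ℕ} {xs : Fin k → M}

@[simp] lemma EFRz_lt {j j' : Fin k} : EFRz c (EFlt j j') xs ↔ xs j < xs j' := by
  simp [EFRz, EFlt, BoundedFormula.Realize, Term.realize, CLOStr, cloRelMap]
  exact Iff.rfl

@[simp] lemma EFRz_eq {j j' : Fin k} : EFRz c (EFeq j j') xs ↔ xs j = xs j' := by
  simp [EFRz, EFeq, BoundedFormula.Realize, Term.realize]

@[simp] lemma EFRz_col {s : ι} {j : Fin k} : EFRz c (EFcol s j) xs ↔ xs j ∈ c s := by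
  simp [EFRz, EFcol, BoundedFormula.Realize, Term.realize, CLOStr, cloRelMap]
  exact Iff.rfl

@[simp] lemma EFRz_not {φ : (CLOLang ι).BoundedFormula Empty k} :
    EFRz c φ.not xs ↔ ¬ EFRz c φ xs := by
  simp [EFRz, BoundedFormula.realize_not]

@[simp] lemma EFRz_inf {φ ψ : (CLOLang ι).BoundedFormula Empty k} :
    EFRz c (φ ⊓ ψ) xs ↔ EFRz c φ xs ∧ EFRz c ψ xs := by
  simp [EFRz, BoundedFormula.realize_inf]

@[simp] lemma EFRz_all {φ : (CLOLang ι).BoundedFormula Empty (k+1)} :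
    EFRz c φ.all xs ↔ ∀ a : M, EFRz c φ (Fin.snoc xs a) := by
  simp [EFRz, BoundedFormula.realize_all]

@[simp] lemma EFRz_ex {φ : (CLOLang ι).BoundedFormula Empty (k+1)} :
    EFRz c φ.ex xs ↔ ∃ a : M, EFRz c φ (Fin.snoc xs a) := by
  simp [EFRz, BoundedFormula.realize_ex]

/-- Conjunction over a finset (the older Mathlib `BoundedFormula.iInf`). -/
noncomputable def fsInf {L : Language} {α β : Type} {n : ℕ} (s : Finset β)
    (f : β → L.BoundedFormula α n) : L.BoundedFormula α n :=
  (s.toList.map f).foldr (· ⊓ ·) ⊤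

/-- Disjunction over a finset (the older Mathlib `BoundedFormula.iSup`). -/
noncomputable def fsSup {L : Language} {α β : Type} {n : ℕ} (s : Finset β)
    (f : β → L.BoundedFormula α n) : L.BoundedFormula α n :=
  (s.toList.map f).foldr (· ⊔ ·) ⊥

@[simp] lemma EFRz_iInf {β : Type} {s : Finset β} {f : β → (CLOLang ι).BoundedFormula Empty k} :
    EFRz c (fsInf s f) xs ↔ ∀ b ∈ s, EFRz c (f b) xs := by
  simp [EFRz, fsInf, BoundedFormula.realize_foldr_inf]

@[simp] lemma EFRz_iSup {β : Type} {s : Finset β} {f : β → (CLOLang ι).BoundedFormula Empty k} :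
    EFRz c (fsSup s f) xs ↔ ∃ b ∈ s, EFRz c (f b) xs := by
  simp [EFRz, fsSup, BoundedFormula.realize_foldr_sup]



section QR
open FirstOrder.Language.BoundedFormula

/-- Quantifier rank. -/
def qrF {L : Language} : ∀ {α : Type} {k : ℕ}, L.BoundedFormula α k → ℕ
  | _, _, .falsum => 0
  | _, _, .equal _ _ => 0
  | _, _, .rel _ _ => 0
  | _, _, .imp f g => max (qrF f) (qrF g)
  | _, _, .all f => qrF f + 1

/-- Colors used in a formula. -/
def colsF {ι : Type} [DecidableEq ι] : ∀ {α : Type} {k : ℕ}, (CLOLang ι).BoundedFormula α k → Finset ι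
  | _, _, .falsum => ∅
  | _, _, .equal _ _ => ∅
  | _, _, .rel r _ =>
      (match r with
        | CLORel.lt => ∅
        | CLORel.color i => {i})
  | _, _, .imp f g => colsF f ∪ colsF g
  | _, _, .all f => colsF f

variable {α : Type} {k : ℕ} {L : Language} {ι : Type} [DecidableEq ι]

@[simp] lemma qrF_bot : qrF (⊥ : L.BoundedFormula α k) = 0 := by
  simp [Bot.bot, qrF]
@[simp] lemma qrF_not (φ : L.BoundedFormula α k) : qrF φ.not = qrF φ := by
  simp [BoundedFormula.not, Bot.bot, qrF]
@[simp] lemma qrF_top : qrF (⊤ : L.BoundedFormula α k) = 0 := by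
  simp [Top.top]
@[simp] lemma qrF_inf (φ ψ : L.BoundedFormula α k) :
    qrF (φ ⊓ ψ) = max (qrF φ) (qrF ψ) := by
  show qrF ((φ.imp ψ.not).not) = _
  simp [qrF]
@[simp] lemma qrF_sup (φ ψ : L.BoundedFormula α k) :
    qrF (φ ⊔ ψ) = max (qrF φ) (qrF ψ) := by
  show qrF (φ.not.imp ψ) = _
  simp [qrF]
@[simp] lemma qrF_ex (φ : L.BoundedFormula α (k+1)) :
    qrF φ.ex = qrF φ + 1 := by
  simp [BoundedFormula.ex, qrF]

lemma qrF_foldr_inf {n : ℕ} (l : List (L.BoundedFormula α k)) (h : ∀ φ ∈ l, qrF φ ≤ n) :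
    qrF (l.foldr (· ⊓ ·) ⊤) ≤ n := by
  induction l with
  | nil => simp
  | cons a l ih =>
      simp only [List.foldr_cons, qrF_inf, max_le_iff]
      exact ⟨h a (by simp), ih fun φ hφ => h φ (by simp [hφ])⟩

lemma qrF_foldr_sup {n : ℕ} (l : List (L.BoundedFormula α k)) (h : ∀ φ ∈ l, qrF φ ≤ n) :
    qrF (l.foldr (· ⊔ ·) ⊥) ≤ n := by
  induction l with
  | nil => simp
  | cons a l ih =>
      simp only [List.foldr_cons, qrF_sup, max_le_iff]
      exact ⟨h a (by simp), ih fun φ hφ => h φ (by simp [hφ])⟩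

lemma qrF_iInf_le {β : Type} {s : Finset β} {f : β → L.BoundedFormula α k} {n : ℕ}
    (h : ∀ b ∈ s, qrF (f b) ≤ n) : qrF (fsInf s f) ≤ n :=
  qrF_foldr_inf _ (by simpa using fun b hb => h b hb)

lemma qrF_iSup_le {β : Type} {s : Finset β} {f : β → L.BoundedFormula α k} {n : ℕ}
    (h : ∀ b ∈ s, qrF (f b) ≤ n) : qrF (fsSup s f) ≤ n :=
  qrF_foldr_sup _ (by simpa using fun b hb => h b hb)

@[simp] lemma colsF_mem_bot {x : ι} : x ∈ colsF (⊥ : (CLOLang ι).BoundedFormula α k) ↔ False := by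
  simp [Bot.bot, colsF]
@[simp] lemma colsF_mem_imp {x : ι} {φ ψ : (CLOLang ι).BoundedFormula α k} :
    x ∈ colsF (φ.imp ψ) ↔ x ∈ colsF φ ∨ x ∈ colsF ψ := by
  simp [colsF, Finset.mem_union]
@[simp] lemma colsF_mem_not {x : ι} {φ : (CLOLang ι).BoundedFormula α k} :
    x ∈ colsF φ.not ↔ x ∈ colsF φ := by
  simp [BoundedFormula.not]
@[simp] lemma colsF_mem_top {x : ι} : x ∈ colsF (⊤ : (CLOLang ι).BoundedFormula α k) ↔ False := by
  simp [Top.top]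
@[simp] lemma colsF_mem_inf {x : ι} {φ ψ : (CLOLang ι).BoundedFormula α k} :
    x ∈ colsF (φ ⊓ ψ) ↔ x ∈ colsF φ ∨ x ∈ colsF ψ := by
  show x ∈ colsF ((φ.imp ψ.not).not) ↔ _
  simp
@[simp] lemma colsF_mem_sup {x : ι} {φ ψ : (CLOLang ι).BoundedFormula α k} :
    x ∈ colsF (φ ⊔ ψ) ↔ x ∈ colsF φ ∨ x ∈ colsF ψ := by
  show x ∈ colsF (φ.not.imp ψ) ↔ _
  simp
@[simp] lemma colsF_mem_all {x : ι} {φ : (CLOLang ι).BoundedFormula α (k+1)} :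
    x ∈ colsF φ.all ↔ x ∈ colsF φ := by
  simp [colsF]
@[simp] lemma colsF_mem_ex {x : ι} {φ : (CLOLang ι).BoundedFormula α (k+1)} :
    x ∈ colsF φ.ex ↔ x ∈ colsF φ := by
  simp [BoundedFormula.ex]

lemma colsF_foldr_inf {S : Finset ι} (l : List ((CLOLang ι).BoundedFormula α k))
    (h : ∀ φ ∈ l, colsF φ ⊆ S) : colsF (l.foldr (· ⊓ ·) ⊤) ⊆ S := by
  induction l with
  | nil => intro x hx; simp at hx
  | cons a l ih =>
      intro x hx
      simp only [List.foldr_cons, colsF_mem_inf] at hx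
      rcases hx with hx | hx
      · exact h a (by simp) hx
      · exact ih (fun φ hφ => h φ (by simp [hφ])) hx

lemma colsF_foldr_sup {S : Finset ι} (l : List ((CLOLang ι).BoundedFormula α k))
    (h : ∀ φ ∈ l, colsF φ ⊆ S) : colsF (l.foldr (· ⊔ ·) ⊥) ⊆ S := by
  induction l with
  | nil => intro x hx; simp at hx
  | cons a l ih =>
      intro x hx
      simp only [List.foldr_cons, colsF_mem_sup] at hx
      rcases hx with hx | hx
      · exact h a (by simp) hx
      · exact ih (fun φ hφ => h φ (by simp [hφ])) hx

lemma colsF_iInf_le {β : Type} {s : Finset β} {f : β → (CLOLang ι).BoundedFormula α k}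
    {S : Finset ι} (h : ∀ b ∈ s, colsF (f b) ⊆ S) : colsF (fsInf s f) ⊆ S :=
  colsF_foldr_inf _ (by simpa using fun b hb => h b hb)

lemma colsF_iSup_le {β : Type} {s : Finset β} {f : β → (CLOLang ι).BoundedFormula α k}
    {S : Finset ι} (h : ∀ b ∈ s, colsF (f b) ⊆ S) : colsF (fsSup s f) ⊆ S :=
  colsF_foldr_sup _ (by simpa using fun b hb => h b hb)

end QR

end EF

section EQN
variable {ι : Type} [DecidableEq ι]
variable {M N P : Type} [LinearOrder M] [LinearOrder N] [LinearOrder P]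

/-- Agreement on atomic relations (order, equality, colors in `S`). -/
def AtomE (S : Finset ι) (cM : ι → Set M) (cN : ι → Set N) {k : ℕ}
    (xs : Fin k → M) (ys : Fin k → N) : Prop :=
  ∀ j j' : Fin k, (xs j < xs j' ↔ ys j < ys j') ∧ (xs j = xs j' ↔ ys j = ys j') ∧
    ∀ s ∈ S, (xs j ∈ cM s ↔ ys j ∈ cN s)

/-- `n`-round Ehrenfeucht–Fraïssé equivalence of tuples. -/
def EqN (S : Finset ι) (cM : ι → Set M) (cN : ι → Set N) :
    ℕ → ∀ {k : ℕ}, (Fin k → M) → (Fin k → N) → Prop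
  | 0, _, xs, ys => AtomE S cM cN xs ys
  | n+1, _, xs, ys => AtomE S cM cN xs ys ∧
      (∀ a : M, ∃ b : N, EqN S cM cN n (Fin.snoc xs a) (Fin.snoc ys b)) ∧
      (∀ b : N, ∃ a : M, EqN S cM cN n (Fin.snoc xs a) (Fin.snoc ys b))

variable {S : Finset ι} {cM : ι → Set M} {cN : ι → Set N} {cP : ι → Set P}

lemma EqN_atom {n k : ℕ} {xs : Fin k → M} {ys : Fin k → N}
    (h : EqN S cM cN n xs ys) : AtomE S cM cN xs ys := by
  cases n with
  | zero => exact h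
  | succ n => exact h.1

lemma EqN_mono_succ {n k : ℕ} {xs : Fin k → M} {ys : Fin k → N}
    (h : EqN S cM cN (n+1) xs ys) : EqN S cM cN n xs ys := by
  induction n generalizing k with
  | zero => exact h.1
  | succ n ih =>
      exact ⟨h.1, fun a => (h.2.1 a).imp (fun b hb => ih hb),
        fun b => (h.2.2 b).imp (fun a ha => ih ha)⟩

lemma EqN_mono {m n k : ℕ} (hmn : m ≤ n) {xs : Fin k → M} {ys : Fin k → N}
    (h : EqN S cM cN n xs ys) : EqN S cM cN m xs ys := by
  induction n with
  | zero => rwa [Nat.le_zero.1 hmn]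
  | succ n ih =>
      rcases Nat.lt_or_ge m (n+1) with hm | hm
      · exact ih (Nat.lt_succ_iff.1 hm) (EqN_mono_succ h)
      · rwa [Nat.le_antisymm hmn hm]

lemma EqN_symm {n k : ℕ} {xs : Fin k → M} {ys : Fin k → N}
    (h : EqN S cM cN n xs ys) : EqN S cN cM n ys xs := by
  induction n generalizing k with
  | zero =>
      intro j j'
      obtain ⟨h1, h2, h3⟩ := h j j'
      exact ⟨h1.symm, h2.symm, fun s hs => (h3 s hs).symm⟩
  | succ n ih =>
      refine ⟨fun j j' => ?_, fun b => (h.2.2 b).imp fun a ha => ih ha,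
        fun a => (h.2.1 a).imp fun b hb => ih hb⟩
      obtain ⟨h1, h2, h3⟩ := h.1 j j'
      exact ⟨h1.symm, h2.symm, fun s hs => (h3 s hs).symm⟩

/-- `EqN` is closed under re-indexing of tuples. -/
lemma EqN_comp {n k k' : ℕ} {xs : Fin k → M} {ys : Fin k → N}
    (h : EqN S cM cN n xs ys) (ρ : Fin k' → Fin k) :
    EqN S cM cN n (xs ∘ ρ) (ys ∘ ρ) := by
  induction n generalizing k k' with
  | zero => exact fun j j' => h (ρ j) (ρ j')
  | succ n ih =>
      refine ⟨fun j j' => h.1 (ρ j) (ρ j'), fun a => ?_, fun b => ?_⟩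
      · obtain ⟨b, hb⟩ := h.2.1 a
        refine ⟨b, ?_⟩
        have := ih hb (Fin.snoc (Fin.castSucc ∘ ρ) (Fin.last k) : Fin (k'+1) → Fin (k+1))
        convert this using 2 <;>
          · funext l
            refine Fin.lastCases ?_ (fun l => ?_) l <;> simp
      · obtain ⟨a, ha⟩ := h.2.2 b
        refine ⟨a, ?_⟩
        have := ih ha (Fin.snoc (Fin.castSucc ∘ ρ) (Fin.last k) : Fin (k'+1) → Fin (k+1))
        convert this using 2 <;>
          · funext l
            refine Fin.lastCases ?_ (fun l => ?_) l <;> simp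

/-- Any two empty tuples are `EqN`-related once one pair is. -/
lemma EqN_zero_congr {n : ℕ} {xs xs' : Fin 0 → M} {ys ys' : Fin 0 → N}
    (h : EqN S cM cN n xs ys) : EqN S cM cN n xs' ys' := by
  have hx : xs' = xs := funext fun j => j.elim0
  have hy : ys' = ys := funext fun j => j.elim0
  rw [hx, hy]; exact h

end EQN

section T1
open FirstOrder.Language
variable {ι : Type} [DecidableEq ι]
variable {M N : Type} [LinearOrder M] [LinearOrder N]
variable {S : Finset ι} {cM : ι → Set M} {cN : ι → Set N}

lemma term_eq_var {k : ℕ} (t : (CLOLang ι).Term (Empty ⊕ Fin k)) :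
    ∃ j : Fin k, t = Term.var (Sum.inr j) := by
  cases t with
  | var v =>
      cases v with
      | inl e => exact e.elim
      | inr j => exact ⟨j, rfl⟩
  | func f _ => exact (f : Empty).elim

lemma EFRz_equal_var {P : Type} [LinearOrder P] {c : ι → Set P} {k : ℕ} {j₁ j₂ : Fin k}
    {zs : Fin k → P} :
    EFRz c (BoundedFormula.equal (Term.var (Sum.inr j₁)) (Term.var (Sum.inr j₂))) zs
      ↔ zs j₁ = zs j₂ := by
  simp [EFRz, BoundedFormula.Realize, Term.realize]

lemma EFRz_rel_lt {P : Type} [LinearOrder P] {c : ι → Set P} {k : ℕ} {j₁ j₂ : Fin k}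
    {zs : Fin k → P} :
    EFRz c (BoundedFormula.rel CLORel.lt ![Term.var (Sum.inr j₁), Term.var (Sum.inr j₂)]) zs
      ↔ zs j₁ < zs j₂ := by
  simp [EFRz, BoundedFormula.Realize, Term.realize, CLOStr, cloRelMap]
  exact Iff.rfl

lemma EFRz_rel_color {P : Type} [LinearOrder P] {c : ι → Set P} {k : ℕ} {s : ι} {j₁ : Fin k}
    {zs : Fin k → P} :
    EFRz c (BoundedFormula.rel (CLORel.color s) ![Term.var (Sum.inr j₁)]) zs
      ↔ zs j₁ ∈ c s := by
  simp [EFRz, BoundedFormula.Realize, Term.realize, CLOStr, cloRelMap]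
  exact Iff.rfl

lemma EqN_realize : ∀ {k : ℕ} (φ : (CLOLang ι).BoundedFormula Empty k) {n : ℕ},
    qrF φ ≤ n → colsF φ ⊆ S →
    ∀ {xs : Fin k → M} {ys : Fin k → N}, EqN S cM cN n xs ys →
      (EFRz cM φ xs ↔ EFRz cN φ ys) := by
  intro k φ
  induction φ with
  | falsum =>
      intro n _ _ xs ys _
      simp [EFRz, BoundedFormula.Realize]
  | equal t₁ t₂ =>
      intro n _ _ xs ys hE
      obtain ⟨j₁, rfl⟩ := term_eq_var t₁
      obtain ⟨j₂, rfl⟩ := term_eq_var t₂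
      rw [EFRz_equal_var, EFRz_equal_var]
      exact ((EqN_atom hE) j₁ j₂).2.1
  | @rel k' l R ts =>
      intro n _ hcol xs ys hE
      cases R with
      | lt =>
          obtain ⟨j₁, h₁⟩ := term_eq_var (ts 0)
          obtain ⟨j₂, h₂⟩ := term_eq_var (ts 1)
          have hts : ts = ![Term.var (Sum.inr j₁), Term.var (Sum.inr j₂)] := by
            funext i
            fin_cases i
            · exact h₁
            · exact h₂
          rw [hts, EFRz_rel_lt, EFRz_rel_lt]
          exact ((EqN_atom hE) j₁ j₂).1
      | color s =>
          obtain ⟨j₁, h₁⟩ := term_eq_var (ts 0)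
          have hts : ts = ![Term.var (Sum.inr j₁)] := by
            funext i
            fin_cases i
            exact h₁
          rw [hts, EFRz_rel_color, EFRz_rel_color]
          have hs : s ∈ S := by
            apply hcol
            rw [hts]
            simp [colsF]
          exact ((EqN_atom hE) j₁ j₁).2.2 s hs
  | imp φ ψ ihφ ihψ =>
      intro n hqr hcol xs ys hE
      have hqr' : max (qrF φ) (qrF ψ) ≤ n := by simpa [qrF] using hqr
      have e1 := ihφ (le_trans (le_max_left _ _) hqr') (fun x hx => hcol (by simp [hx])) hE
      have e2 := ihψ (le_trans (le_max_right _ _) hqr') (fun x hx => hcol (by simp [hx])) hE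
      simp only [EFRz, BoundedFormula.Realize] at *
      tauto
  | all φ ihφ =>
      intro n hqr hcol xs ys hE
      have hqr' : qrF φ + 1 ≤ n := by simpa [qrF] using hqr
      obtain ⟨n, rfl⟩ : ∃ n', n = n' + 1 := ⟨n - 1, by omega⟩
      have hq : qrF φ ≤ n := by omega
      have hc : colsF φ ⊆ S := fun x hx => hcol (by simpa using hx)
      rw [show BoundedFormula.all φ = φ.all from rfl, EFRz_all, EFRz_all]
      constructor
      · intro hall b
        obtain ⟨a, ha⟩ := hE.2.2 b
        exact (ihφ hq hc ha).1 (hall a)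
      · intro hall a
        obtain ⟨b, hb⟩ := hE.2.1 a
        exact (ihφ hq hc hb).2 (hall b)

end T1

section THETA
open FirstOrder.Language

attribute [local instance 10] Classical.propDecidable

variable {ι : Type} [DecidableEq ι]

@[simp] lemma qrF_all' {L : Language} {α : Type} {k : ℕ} (φ : L.BoundedFormula α (k+1)) :
    qrF φ.all = qrF φ + 1 := by simp [qrF]

@[simp] lemma qrF_EFlt {k : ℕ} (j j' : Fin k) : qrF (EFlt (ι := ι) j j') = 0 := by
  simp [EFlt, qrF]
  exact qrF.eq_3 _ _ _ _ _
@[simp] lemma qrF_EFeq {k : ℕ} (j j' : Fin k) : qrF (EFeq (ι := ι) j j') = 0 := by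
  simp [EFeq, qrF]
@[simp] lemma qrF_EFcol {k : ℕ} (s : ι) (j : Fin k) : qrF (EFcol s j) = 0 := by
  simp [EFcol, qrF]
  exact qrF.eq_3 _ _ _ _ _

/-- The finitely many atomic formulas in `k` variables with colors in `S`. -/
noncomputable def atomsF (S : Finset ι) (k : ℕ) :
    Finset ((CLOLang ι).BoundedFormula Empty k) :=
  ((Finset.univ : Finset (Fin k × Fin k)).image fun p => EFlt p.1 p.2) ∪
  ((Finset.univ : Finset (Fin k × Fin k)).image fun p => EFeq p.1 p.2) ∪
  ((S ×ˢ (Finset.univ : Finset (Fin k))).image fun p => EFcol p.1 p.2)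

lemma EFlt_mem_atomsF {S : Finset ι} {k : ℕ} (j j' : Fin k) : EFlt j j' ∈ atomsF S k := by
  simp only [atomsF, Finset.mem_union, Finset.mem_image]
  exact Or.inl (Or.inl ⟨(j, j'), by simp⟩)

lemma EFeq_mem_atomsF {S : Finset ι} {k : ℕ} (j j' : Fin k) : EFeq j j' ∈ atomsF S k := by
  simp only [atomsF, Finset.mem_union, Finset.mem_image]
  exact Or.inl (Or.inr ⟨(j, j'), by simp⟩)

lemma EFcol_mem_atomsF {S : Finset ι} {k : ℕ} {s : ι} (hs : s ∈ S) (j : Fin k) :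
    EFcol s j ∈ atomsF S k := by
  simp only [atomsF, Finset.mem_union, Finset.mem_image]
  exact Or.inr ⟨(s, j), by simp [hs]⟩

lemma atomsF_qr {S : Finset ι} {k : ℕ} {φ : (CLOLang ι).BoundedFormula Empty k}
    (h : φ ∈ atomsF S k) : qrF φ = 0 := by
  simp only [atomsF, Finset.mem_union, Finset.mem_image] at h
  rcases h with (⟨p, _, rfl⟩ | ⟨p, _, rfl⟩) | ⟨p, _, rfl⟩ <;> simp

lemma atomsF_cols {S : Finset ι} {k : ℕ} {φ : (CLOLang ι).BoundedFormula Empty k}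
    (h : φ ∈ atomsF S k) : colsF φ ⊆ S := by
  simp only [atomsF, Finset.mem_union, Finset.mem_image, Finset.mem_product] at h
  rcases h with (⟨p, _, rfl⟩ | ⟨p, _, rfl⟩) | ⟨p, hp, rfl⟩
  · simp [EFlt, colsF]
  · simp [EFeq, colsF]
  · simp only [EFcol, colsF]
    intro x hx
    simp only [Finset.mem_singleton] at hx
    rw [hx]
    exact hp.1

/-- The rank-0 Hintikka formula associated to a set `s` of atoms. -/
noncomputable def mkT0 (S : Finset ι) (k : ℕ)
    (s : Finset ((CLOLang ι).BoundedFormula Empty k)) : (CLOLang ι).BoundedFormula Empty k :=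
  fsInf (atomsF S k) (fun φ => if φ ∈ s then φ else φ.not)

/-- The successor-rank Hintikka formula. -/
noncomputable def mkTS (S : Finset ι) (k : ℕ)
    (s : Finset ((CLOLang ι).BoundedFormula Empty k))
    (t : Finset ((CLOLang ι).BoundedFormula Empty (k+1))) :
    (CLOLang ι).BoundedFormula Empty k :=
  mkT0 S k s ⊓
    (fsInf t BoundedFormula.ex ⊓ (fsSup t id).all)

lemma qrF_mkT0 {S : Finset ι} {k : ℕ} {s : Finset ((CLOLang ι).BoundedFormula Empty k)} :
    qrF (mkT0 S k s) = 0 := by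
  rw [mkT0]
  refine Nat.le_zero.1 (qrF_iInf_le fun φ hφ => ?_)
  by_cases h : φ ∈ s <;> simp [h, atomsF_qr hφ]

lemma colsF_mkT0 {S : Finset ι} {k : ℕ} {s : Finset ((CLOLang ι).BoundedFormula Empty k)} :
    colsF (mkT0 S k s) ⊆ S := by
  rw [mkT0]
  refine colsF_iInf_le fun φ hφ => ?_
  by_cases h : φ ∈ s
  · simpa [h] using atomsF_cols hφ
  · rw [if_neg h]
    intro x hx
    rw [colsF_mem_not] at hx
    exact atomsF_cols hφ hx

/-- The finite set of all possible rank-`n` Hintikka formulas. -/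
noncomputable def bigT (S : Finset ι) : ℕ → (k : ℕ) → Finset ((CLOLang ι).BoundedFormula Empty k)
  | 0, k => (atomsF S k).powerset.image (mkT0 S k)
  | n+1, k =>
      ((atomsF S k).powerset ×ˢ (bigT S n (k+1)).powerset).image
        (fun p => mkTS S k p.1 p.2)

/-- The rank-`n` Hintikka formula of a tuple `xs`. -/
noncomputable def thetaF {M : Type} [LinearOrder M] (c : ι → Set M) (S : Finset ι) :
    ℕ → ∀ k : ℕ, (Fin k → M) → (CLOLang ι).BoundedFormula Empty k
  | 0, k, xs => mkT0 S k ((atomsF S k).filter (fun φ => EFRz c φ xs))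
  | n+1, k, xs =>
      mkTS S k ((atomsF S k).filter (fun φ => EFRz c φ xs))
        ((bigT S n (k+1)).filter
          (fun ψ => ∃ a : M, ψ = thetaF c S n (k+1) (Fin.snoc xs a)))

variable {M N : Type} [LinearOrder M] [LinearOrder N]
variable {S : Finset ι} {c : ι → Set M} {c' : ι → Set N}

lemma thetaF_mem_bigT (n k : ℕ) (xs : Fin k → M) : thetaF c S n k xs ∈ bigT S n k := by
  cases n with
  | zero =>
      rw [thetaF, bigT]
      exact Finset.mem_image_of_mem _ (Finset.mem_powerset.2 (Finset.filter_subset _ _))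
  | succ n =>
      rw [thetaF, bigT]
      rw [Finset.mem_image]
      refine ⟨(((atomsF S k).filter (fun φ => EFRz c φ xs)),
        ((bigT S n (k+1)).filter
          (fun ψ => ∃ a : M, ψ = thetaF c S n (k+1) (Fin.snoc xs a)))), ?_, rfl⟩
      rw [Finset.mem_product]
      exact ⟨Finset.mem_powerset.2 (Finset.filter_subset _ _),
        Finset.mem_powerset.2 (Finset.filter_subset _ _)⟩

lemma bigT_qr : ∀ (n k : ℕ) (ψ : (CLOLang ι).BoundedFormula Empty k),
    ψ ∈ bigT S n k → qrF ψ ≤ n := by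
  intro n
  induction n with
  | zero =>
      intro k ψ hψ
      rw [bigT] at hψ
      obtain ⟨s, _, rfl⟩ := Finset.mem_image.1 hψ
      exact Nat.le_zero.2 qrF_mkT0
  | succ n ih =>
      intro k ψ hψ
      rw [bigT] at hψ
      obtain ⟨p, hp, rfl⟩ := Finset.mem_image.1 hψ
      rw [Finset.mem_product] at hp
      rw [mkTS, qrF_inf, qrF_inf]
      have h2 : qrF (fsInf p.2 BoundedFormula.ex) ≤ n + 1 := by
        refine qrF_iInf_le fun χ hχ => ?_
        rw [qrF_ex]
        exact Nat.succ_le_succ (ih (k+1) χ (Finset.mem_powerset.1 hp.2 hχ))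
      have h3 : qrF (fsSup p.2 id).all ≤ n + 1 := by
        rw [qrF_all']
        exact Nat.succ_le_succ
          (qrF_iSup_le fun χ hχ => ih (k+1) χ (Finset.mem_powerset.1 hp.2 hχ))
      have h1 : qrF (mkT0 S k p.1) = 0 := qrF_mkT0
      omega

lemma bigT_cols : ∀ (n k : ℕ) (ψ : (CLOLang ι).BoundedFormula Empty k),
    ψ ∈ bigT S n k → colsF ψ ⊆ S := by
  intro n
  induction n with
  | zero =>
      intro k ψ hψ
      rw [bigT] at hψ
      obtain ⟨s, _, rfl⟩ := Finset.mem_image.1 hψ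
      exact colsF_mkT0
  | succ n ih =>
      intro k ψ hψ
      rw [bigT] at hψ
      obtain ⟨p, hp, rfl⟩ := Finset.mem_image.1 hψ
      rw [Finset.mem_product] at hp
      rw [mkTS]
      have hA : colsF (fsInf p.2 BoundedFormula.ex) ⊆ S := by
        refine colsF_iInf_le fun χ hχ => ?_
        intro y hy
        rw [colsF_mem_ex] at hy
        exact ih (k+1) χ (Finset.mem_powerset.1 hp.2 hχ) hy
      have hB : colsF (fsSup p.2 id) ⊆ S :=
        colsF_iSup_le fun χ hχ => ih (k+1) χ (Finset.mem_powerset.1 hp.2 hχ)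
      intro x hx
      rw [colsF_mem_inf, colsF_mem_inf] at hx
      rcases hx with hx | hx | hx
      · exact colsF_mkT0 hx
      · exact hA hx
      · rw [colsF_mem_all] at hx
        exact hB hx

lemma mkT0_realize_self (k : ℕ) (xs : Fin k → M) :
    EFRz c (mkT0 S k ((atomsF S k).filter (fun φ => EFRz c φ xs))) xs := by
  rw [mkT0, EFRz_iInf]
  intro φ hφ
  by_cases h : EFRz c φ xs
  · rw [if_pos (Finset.mem_filter.2 ⟨hφ, h⟩)]
    exact h
  · have h' : φ ∉ (atomsF S k).filter (fun φ => EFRz c φ xs) :=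
      fun hmem => h (Finset.mem_filter.1 hmem).2
    rw [if_neg h', EFRz_not]
    exact h

lemma mkT0_decode (k : ℕ) (xs : Fin k → M) (ys : Fin k → N)
    (hR : EFRz c' (mkT0 S k ((atomsF S k).filter (fun φ => EFRz c φ xs))) ys) :
    AtomE S c c' xs ys := by
  rw [mkT0, EFRz_iInf] at hR
  have key : ∀ φ ∈ atomsF S k, (EFRz c φ xs ↔ EFRz c' φ ys) := by
    intro φ hφ
    have := hR φ hφ
    by_cases h : EFRz c φ xs
    · rw [if_pos (Finset.mem_filter.2 ⟨hφ, h⟩)] at this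
      exact iff_of_true h this
    · have h' : φ ∉ (atomsF S k).filter (fun φ => EFRz c φ xs) :=
        fun hmem => h (Finset.mem_filter.1 hmem).2
      rw [if_neg h', EFRz_not] at this
      exact iff_of_false h this
  intro j j'
  refine ⟨?_, ?_, fun s hs => ?_⟩
  · have := key (EFlt j j') (EFlt_mem_atomsF j j')
    rwa [EFRz_lt, EFRz_lt] at this
  · have := key (EFeq j j') (EFeq_mem_atomsF j j')
    rwa [EFRz_eq, EFRz_eq] at this
  · have := key (EFcol s j) (EFcol_mem_atomsF hs j)
    rwa [EFRz_col, EFRz_col] at this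

lemma thetaF_realize_self (n : ℕ) : ∀ (k : ℕ) (xs : Fin k → M),
    EFRz c (thetaF c S n k xs) xs := by
  induction n with
  | zero =>
      intro k xs
      rw [thetaF]
      exact mkT0_realize_self k xs
  | succ n ih =>
      intro k xs
      rw [thetaF, mkTS, EFRz_inf, EFRz_inf]
      refine ⟨mkT0_realize_self k xs, ?_, ?_⟩
      · rw [EFRz_iInf]
        intro χ hχ
        obtain ⟨a, rfl⟩ := (Finset.mem_filter.1 hχ).2
        rw [EFRz_ex]
        exact ⟨a, ih (k+1) (Fin.snoc xs a)⟩
      · rw [EFRz_all]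
        intro a
        rw [EFRz_iSup]
        refine ⟨thetaF c S n (k+1) (Fin.snoc xs a), ?_, ih (k+1) (Fin.snoc xs a)⟩
        exact Finset.mem_filter.2 ⟨thetaF_mem_bigT n (k+1) _, ⟨a, rfl⟩⟩

lemma thetaF_decode (n : ℕ) : ∀ (k : ℕ) (xs : Fin k → M) (ys : Fin k → N),
    EFRz c' (thetaF c S n k xs) ys → EqN S c c' n xs ys := by
  induction n with
  | zero =>
      intro k xs ys hR
      rw [thetaF] at hR
      exact mkT0_decode k xs ys hR
  | succ n ih =>
      intro k xs ys hR
      rw [thetaF, mkTS, EFRz_inf, EFRz_inf] at hR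
      obtain ⟨h0, hforth, hback⟩ := hR
      refine ⟨mkT0_decode k xs ys h0, fun a => ?_, fun b => ?_⟩
      · rw [EFRz_iInf] at hforth
        have hmem : thetaF c S n (k+1) (Fin.snoc xs a) ∈
            (bigT S n (k+1)).filter
              (fun ψ => ∃ a' : M, ψ = thetaF c S n (k+1) (Fin.snoc xs a')) :=
          Finset.mem_filter.2 ⟨thetaF_mem_bigT n (k+1) _, ⟨a, rfl⟩⟩
        have := hforth _ hmem
        rw [EFRz_ex] at this
        obtain ⟨b, hb⟩ := this
        exact ⟨b, ih (k+1) _ _ hb⟩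
      · rw [EFRz_all] at hback
        have := hback b
        rw [EFRz_iSup] at this
        obtain ⟨ψ, hψ, hrz⟩ := this
        obtain ⟨a, rfl⟩ := (Finset.mem_filter.1 hψ).2
        exact ⟨a, ih (k+1) _ _ hrz⟩

end THETA



section SUM
open FirstOrder.Language

attribute [local instance 10] Classical.propDecidable

variable {ι : Type} [DecidableEq ι] {I : Type} [LinearOrder I]
variable {A B : I → Type} [∀ i, LinearOrder (A i)] [∀ i, LinearOrder (B i)]
variable {cA : ∀ i, ι → Set (A i)} {cB : ∀ i, ι → Set (B i)} {S : Finset ι}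

lemma lex_eta {C : I → Type} (x : Σₗ i, C i) {i : I} (h : x.1 = i) :
    x = toLex ⟨i, h ▸ x.2⟩ := by
  subst h
  rfl

lemma lex_sec_eq {C : I → Type} {x : Σₗ i, C i} {i : I} {w : C i}
    (hx : x = toLex ⟨i, w⟩) (h : x.1 = i) : h ▸ x.2 = w := by
  subst hx
  have he : h = rfl := Subsingleton.elim _ _
  rw [he]
  rfl

lemma lex_mk_lt_mk_same {C : I → Type} [∀ i, LinearOrder (C i)] {i : I} {a b : C i} :
    (toLex ⟨i, a⟩ : Σₗ i, C i) < toLex ⟨i, b⟩ ↔ a < b := by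
  rw [Sigma.Lex.lt_def]
  constructor
  · rintro (h | ⟨h, hlt⟩)
    · exact absurd h (lt_irrefl i)
    · have : h = rfl := Subsingleton.elim _ _
      rw [this] at hlt
      exact hlt
  · intro h
    exact Or.inr ⟨rfl, h⟩

lemma lex_mk_lt_mk_left {C : I → Type} [∀ i, LinearOrder (C i)] {i i' : I} (h : i < i')
    (a : C i) (b : C i') : (toLex ⟨i, a⟩ : Σₗ i, C i) < toLex ⟨i', b⟩ :=
  Sigma.Lex.lt_def.2 (Or.inl h)

lemma lex_lt_idx {C : I → Type} [∀ i, LinearOrder (C i)] {x y : Σₗ i, C i}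
    (h : x < y) : x.1 ≤ y.1 := by
  rcases Sigma.Lex.lt_def.1 h with h' | ⟨h', _⟩
  · exact le_of_lt h'
  · exact le_of_eq h'

lemma lex_mk_eq_mk_same {C : I → Type} {i : I} {a b : C i} :
    (toLex ⟨i, a⟩ : Σₗ i, C i) = toLex ⟨i, b⟩ ↔ a = b := by
  constructor
  · intro h
    have h2 : (⟨i, a⟩ : Σ i, C i) = ⟨i, b⟩ := h
    simpa using h2
  · rintro rfl
    rfl

lemma lex_eq_idx {C : I → Type} {x y : Σₗ i, C i} (h : x = y) : x.1 = y.1 := by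
  rw [h]

lemma sigmaColor_mem_mk {C : I → Type} {c : ∀ i, ι → Set (C i)} {i : I} {a : C i} {s : ι} :
    (toLex ⟨i, a⟩ : Σₗ i, C i) ∈ sigmaColor c s ↔ a ∈ c i s := Iff.rfl

/-- The back-and-forth invariant between tuples in the two sums. -/
def InvS (S : Finset ι) (cA : ∀ i, ι → Set (A i)) (cB : ∀ i, ι → Set (B i)) (n : ℕ) {k : ℕ}
    (xs : Fin k → Σₗ i, A i) (ys : Fin k → Σₗ i, B i) : Prop :=
  (∀ j, (xs j).1 = (ys j).1) ∧
  ∀ (i : I) (m : ℕ) (js : Fin m → Fin k) (us : Fin m → A i) (vs : Fin m → B i),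
    (∀ l, xs (js l) = toLex ⟨i, us l⟩) → (∀ l, ys (js l) = toLex ⟨i, vs l⟩) →
    EqN S (cA i) (cB i) n us vs

lemma InvS_symm {n k : ℕ} {xs : Fin k → Σₗ i, A i} {ys : Fin k → Σₗ i, B i}
    (h : InvS S cA cB n xs ys) : InvS S cB cA n ys xs :=
  ⟨fun j => (h.1 j).symm,
   fun i m js vs us h2 h1 => EqN_symm (h.2 i m js us vs h1 h2)⟩

lemma InvS_mono_succ {n k : ℕ} {xs : Fin k → Σₗ i, A i} {ys : Fin k → Σₗ i, B i}
    (h : InvS S cA cB (n+1) xs ys) : InvS S cA cB n xs ys :=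
  ⟨h.1, fun i m js us vs h1 h2 => EqN_mono_succ (h.2 i m js us vs h1 h2)⟩

lemma InvS_atom {n k : ℕ} {xs : Fin k → Σₗ i, A i} {ys : Fin k → Σₗ i, B i}
    (h : InvS S cA cB n xs ys) : AtomE S (sigmaColor cA) (sigmaColor cB) xs ys := by
  have hcol : ∀ (j : Fin k) (s : ι), s ∈ S → ((xs j) ∈ sigmaColor cA s ↔ (ys j) ∈ sigmaColor cB s) := by
    intro j s hs
    have hidx := h.1 j
    have hE := h.2 ((xs j).1) 1 (fun _ => j) (fun _ => (xs j).2)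
      (fun _ => hidx.symm ▸ (ys j).2) (fun _ => rfl) (fun _ => lex_eta _ hidx.symm)
    have h3 := ((EqN_atom hE) 0 0).2.2 s hs
    have e1 : xs j = toLex ⟨(xs j).1, (xs j).2⟩ := rfl
    have e3 : ys j = toLex ⟨(xs j).1, hidx.symm ▸ (ys j).2⟩ := lex_eta _ hidx.symm
    rw [e1, e3, sigmaColor_mem_mk, sigmaColor_mem_mk]
    exact h3
  intro j j'
  have hidx := h.1 j
  have hidx' := h.1 j'
  rcases lt_trichotomy (xs j).1 (xs j').1 with hlt | heq | hgt
  · have hxlt : xs j < xs j' := by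
      rw [show xs j = toLex ⟨(xs j).1, (xs j).2⟩ from rfl,
        show xs j' = toLex ⟨(xs j').1, (xs j').2⟩ from rfl]
      exact lex_mk_lt_mk_left hlt _ _
    have hylt : ys j < ys j' := by
      rw [show ys j = toLex ⟨(ys j).1, (ys j).2⟩ from rfl,
        show ys j' = toLex ⟨(ys j').1, (ys j').2⟩ from rfl]
      exact lex_mk_lt_mk_left (by rw [← hidx, ← hidx']; exact hlt) _ _
    refine ⟨iff_of_true hxlt hylt, iff_of_false ?_ ?_, fun s hs => hcol j s hs⟩
    · intro hc
      exact absurd (lex_eq_idx hc) (ne_of_lt hlt)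
    · intro hc
      exact absurd (lex_eq_idx hc) (by rw [← hidx, ← hidx']; exact ne_of_lt hlt)
  · have e1 : xs j = toLex ⟨(xs j).1, (xs j).2⟩ := rfl
    have e2 : xs j' = toLex ⟨(xs j).1, heq.symm ▸ (xs j').2⟩ := lex_eta _ heq.symm
    have e3 : ys j = toLex ⟨(xs j).1, hidx.symm ▸ (ys j).2⟩ := lex_eta _ hidx.symm
    have e4 : ys j' = toLex ⟨(xs j).1, (hidx'.symm.trans heq.symm) ▸ (ys j').2⟩ :=
      lex_eta _ (hidx'.symm.trans heq.symm)
    have hE := h.2 ((xs j).1) 2 ![j, j']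
      ![(xs j).2, heq.symm ▸ (xs j').2]
      ![hidx.symm ▸ (ys j).2, (hidx'.symm.trans heq.symm) ▸ (ys j').2]
      (by
        intro l
        fin_cases l
        · exact e1
        · exact e2)
      (by
        intro l
        fin_cases l
        · exact e3
        · exact e4)
    have hat := (EqN_atom hE) 0 1
    refine ⟨?_, ?_, fun s hs => hcol j s hs⟩
    · rw [e1, e2, e3, e4, lex_mk_lt_mk_same, lex_mk_lt_mk_same]
      simpa using hat.1
    · rw [e1, e2, e3, e4, lex_mk_eq_mk_same, lex_mk_eq_mk_same]
      simpa using hat.2.1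
  · have hxlt : xs j' < xs j := by
      rw [show xs j = toLex ⟨(xs j).1, (xs j).2⟩ from rfl,
        show xs j' = toLex ⟨(xs j').1, (xs j').2⟩ from rfl]
      exact lex_mk_lt_mk_left hgt _ _
    have hylt : ys j' < ys j := by
      rw [show ys j = toLex ⟨(ys j).1, (ys j).2⟩ from rfl,
        show ys j' = toLex ⟨(ys j').1, (ys j').2⟩ from rfl]
      exact lex_mk_lt_mk_left (by rw [← hidx, ← hidx']; exact hgt) _ _
    refine ⟨iff_of_false (asymm hxlt) (asymm hylt), iff_of_false ?_ ?_,
      fun s hs => hcol j s hs⟩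
    · intro hc
      exact absurd (lex_eq_idx hc) (ne_of_gt hgt)
    · intro hc
      exact absurd (lex_eq_idx hc) (by rw [← hidx, ← hidx']; exact ne_of_gt hgt)

lemma InvS_extend {n k : ℕ} {xs : Fin k → Σₗ i, A i} {ys : Fin k → Σₗ i, B i}
    (h : InvS S cA cB (n+1) xs ys) (a : Σₗ i, A i) :
    ∃ b : Σₗ i, B i, InvS S cA cB n (Fin.snoc xs a) (Fin.snoc ys b) := by
  set t : Finset (Fin k) := Finset.univ.filter (fun j => (xs j).1 = a.1) with ht
  have htmem : ∀ j, j ∈ t ↔ (xs j).1 = a.1 := by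
    intro j
    simp [ht]
  set e : t ≃ Fin t.card := t.equivFin with he
  have hxat : ∀ p : t, (xs p).1 = a.1 := fun p => (htmem p).1 p.2
  have hyat : ∀ p : t, (ys p).1 = a.1 := fun p => (h.1 p).symm.trans (hxat p)
  set us : Fin t.card → A a.1 := fun l => (hxat (e.symm l)) ▸ (xs (e.symm l)).2 with hus_def
  set vs : Fin t.card → B a.1 := fun l => (hyat (e.symm l)) ▸ (ys (e.symm l)).2 with hvs_def
  have hus_val : ∀ p : t, us (e p) = (hxat p) ▸ (xs p).2 := by
    intro p
    have hp : e.symm (e p) = p := Equiv.symm_apply_apply e p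
    simp only [hus_def]
    rw [hp]
  have hvs_val : ∀ p : t, vs (e p) = (hyat p) ▸ (ys p).2 := by
    intro p
    have hp : e.symm (e p) = p := Equiv.symm_apply_apply e p
    simp only [hvs_def]
    rw [hp]
  have hEq : EqN S (cA a.1) (cB a.1) (n+1) us vs :=
    h.2 a.1 t.card (fun l => (e.symm l : Fin k)) us vs
      (fun l => lex_eta _ (hxat (e.symm l)))
      (fun l => lex_eta _ (hyat (e.symm l)))
  obtain ⟨β, hβ⟩ := hEq.2.1 a.2
  refine ⟨toLex ⟨a.1, β⟩, ?_, ?_⟩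
  · intro j
    refine Fin.lastCases ?_ (fun j0 => ?_) j
    · rw [Fin.snoc_last, Fin.snoc_last]
      rfl
    · rw [Fin.snoc_castSucc, Fin.snoc_castSucc]
      exact h.1 j0
  · intro i' m' js' us' vs' h1 h2
    by_cases hii : i' = a.1
    · subst hii
      have hmem : ∀ (l : Fin m') (hl : js' l ≠ Fin.last k), ((js' l).castPred hl) ∈ t := by
        intro l hl
        rw [htmem]
        have h1l := h1 l
        rw [show js' l = ((js' l).castPred hl).castSucc by simp, Fin.snoc_castSucc] at h1l
        have := lex_eq_idx h1l
        exact this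
      set ρ : Fin m' → Fin (t.card + 1) := fun l =>
        if hl : js' l = Fin.last k then Fin.last t.card
        else (e ⟨(js' l).castPred hl, hmem l hl⟩).castSucc with hρ
      have husρ : (Fin.snoc us a.2 : Fin (t.card+1) → A a.1) ∘ ρ = us' := by
        funext l
        by_cases hl : js' l = Fin.last k
        · have h1l := h1 l
          rw [hl, Fin.snoc_last] at h1l
          simp only [Function.comp_apply, hρ, dif_pos hl, Fin.snoc_last]
          exact lex_sec_eq h1l rfl
        · have h1l := h1 l
          rw [show js' l = ((js' l).castPred hl).castSucc by simp, Fin.snoc_castSucc] at h1l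
          simp only [Function.comp_apply, hρ, dif_neg hl, Fin.snoc_castSucc]
          rw [hus_val ⟨(js' l).castPred hl, hmem l hl⟩]
          exact lex_sec_eq h1l _
      have hvsρ : (Fin.snoc vs β : Fin (t.card+1) → B a.1) ∘ ρ = vs' := by
        funext l
        by_cases hl : js' l = Fin.last k
        · have h2l := h2 l
          rw [hl, Fin.snoc_last] at h2l
          simp only [Function.comp_apply, hρ, dif_pos hl, Fin.snoc_last]
          exact lex_sec_eq h2l rfl
        · have h2l := h2 l
          rw [show js' l = ((js' l).castPred hl).castSucc by simp, Fin.snoc_castSucc] at h2l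
          simp only [Function.comp_apply, hρ, dif_neg hl, Fin.snoc_castSucc]
          rw [hvs_val ⟨(js' l).castPred hl, hmem l hl⟩]
          exact lex_sec_eq h2l _
      have := EqN_comp hβ ρ
      rwa [husρ, hvsρ] at this
    · have hne : ∀ l : Fin m', js' l ≠ Fin.last k := by
        intro l hl
        have h1l := h1 l
        rw [hl, Fin.snoc_last] at h1l
        exact hii (lex_eq_idx h1l).symm
      have key := h.2 i' m' (fun l => (js' l).castPred (hne l)) us' vs'
        (fun l => by
          have h1l := h1 l
          rwa [show js' l = ((js' l).castPred (hne l)).castSucc by simp,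
            Fin.snoc_castSucc] at h1l)
        (fun l => by
          have h2l := h2 l
          rwa [show js' l = ((js' l).castPred (hne l)).castSucc by simp,
            Fin.snoc_castSucc] at h2l)
      exact EqN_mono_succ key

lemma InvS_EqN : ∀ (n : ℕ) {k : ℕ} (xs : Fin k → Σₗ i, A i) (ys : Fin k → Σₗ i, B i),
    InvS S cA cB n xs ys → EqN S (sigmaColor cA) (sigmaColor cB) n xs ys := by
  intro n
  induction n with
  | zero => exact fun xs ys h => InvS_atom h
  | succ n ih =>
      intro k xs ys h
      refine ⟨InvS_atom h, fun a => ?_, fun b => ?_⟩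
      · obtain ⟨b, hb⟩ := InvS_extend h a
        exact ⟨b, ih _ _ hb⟩
      · obtain ⟨a, ha⟩ := InvS_extend (InvS_symm h) b
        exact ⟨a, ih _ _ (InvS_symm ha)⟩

end SUM


section FINAL
open FirstOrder.Language

variable {ι : Type}

lemma EFRz_sentence {M : Type} [LinearOrder M] (c : ι → Set M)
    (φ : (CLOLang ι).Sentence) (xs : Fin 0 → M) :
    EFRz c φ xs ↔ (letI := CLOStr ι M c; M ⊨ φ) := by
  letI := CLOStr ι M c
  unfold EFRz Sentence.Realize Formula.Realize
  have h1 : (fun e => e.elim : Empty → M) = default := funext fun e => e.elim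
  have h2 : xs = (default : Fin 0 → M) := Subsingleton.elim _ _
  rw [h1, h2]

lemma CLOEquiv_EqN [DecidableEq ι] {M N : Type} [LinearOrder M] [LinearOrder N]
    {cM : ι → Set M} {cN : ι → Set N}
    (h : CLOEquiv ι M cM N cN) (S : Finset ι) (n : ℕ) (xs : Fin 0 → M) (ys : Fin 0 → N) :
    EqN S cM cN n xs ys := by
  letI := CLOStr ι M cM
  letI := CLOStr ι N cN
  have h2 := thetaF_realize_self (c := cM) (S := S) n 0 xs
  have htr := Language.elementarilyEquivalent_iff.1 h (thetaF cM S n 0 xs)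
  have hN : EFRz cN (thetaF cM S n 0 xs) ys := by
    rw [EFRz_sentence]
    exact htr.1 ((EFRz_sentence cM _ xs).1 h2)
  exact thetaF_decode n 0 xs ys hN

end FINAL

theorem stmt1 {ι : Type} [Countable ι] {I : Type} [LinearOrder I]
    (A B : I → Type) [∀ i, LinearOrder (A i)] [∀ i, LinearOrder (B i)]
    (cA : ∀ i, ι → Set (A i)) (cB : ∀ i, ι → Set (B i))
    (h : ∀ i, CLOEquiv ι (A i) (cA i) (B i) (cB i)) :
    CLOEquiv ι (Σₗ i, A i) (sigmaColor cA) (Σₗ i, B i) (sigmaColor cB) := by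
  letI : DecidableEq ι := Classical.decEq ι
  letI := CLOStr ι (Σₗ i, A i) (sigmaColor cA)
  letI := CLOStr ι (Σₗ i, B i) (sigmaColor cB)
  show (Σₗ i, A i) ≅[CLOLang ι] (Σₗ i, B i)
  rw [Language.elementarilyEquivalent_iff]
  intro φ
  have hInv : InvS (colsF φ) cA cB (qrF φ) (fun j : Fin 0 => j.elim0)
      (fun j : Fin 0 => j.elim0) := by
    constructor
    · intro j
      exact j.elim0
    · intro i m js us vs h1 h2
      cases m with
      | zero => exact CLOEquiv_EqN (h i) _ _ us vs
      | succ m => exact (js 0).elim0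
  have hEq := InvS_EqN (qrF φ) _ _ hInv
  have hiff := EqN_realize (S := colsF φ) (φ := φ) le_rfl (subset_refl _) hEq
  rw [EFRz_sentence, EFRz_sentence] at hiff
  exact hiff
end

section
/- Let Φ(x) be a set of L_κ-formulas in one free variable without parameters, let A be a CLO, and suppose the set C = Φ(A) of common realizations of Φ in A is convex. Write A = B₁ + C + B₂, where B₁ (resp. B₂) is the set of elements of A∖C lying below (resp. above) every element of C. If D is an L_κ-structure elementarily equivalent to C, then the sum A_D := B₁ + D + B₂ is elementarily equivalent to A, and the set of common realizations of Φ in A_D is exactly D. -/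
open FirstOrder Language Set

section FVInfra

variable {ι : Type}

/-- Every term of `CLOLang` is a variable. -/
def tmVar {X : Type} : (CLOLang ι).Term X → X
  | .var x => x
  | .func f _ => Empty.elim f

lemma tmVar_realize {M X : Type} [S : (CLOLang ι).Structure M] (v : X → M)
    (t : (CLOLang ι).Term X) : t.realize v = v (tmVar t) := by
  cases t with
  | var => rfl
  | func f _ => exact Empty.elim f

/-- Satisfaction of bounded formulas with explicit `CLOStr` instance. -/
def SatBF (M : Type) [LinearOrder M] (c : ι → Set M) {τ : Type} {n : ℕ}
    (φ : (CLOLang ι).BoundedFormula τ n) (v : τ → M) (xs : Fin n → M) : Prop :=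
  @BoundedFormula.Realize (CLOLang ι) M (CLOStr ι M c) τ n φ v xs

lemma sat_iff_satBF {M : Type} [LinearOrder M] {c : ι → Set M} {τ : Type}
    {φ : (CLOLang ι).Formula τ} {v : τ → M} (xs : Fin 0 → M) :
    Sat M c φ v ↔ SatBF M c φ v xs := by
  have : xs = default := funext fun k => k.elim0
  subst this
  exact Iff.rfl

lemma sat_inf {M : Type} [LinearOrder M] {c : ι → Set M} {τ : Type}
    {φ ψ : (CLOLang ι).Formula τ} {v : τ → M} :
    Sat M c (φ ⊓ ψ) v ↔ Sat M c φ v ∧ Sat M c ψ v := by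
  letI := CLOStr ι M c
  exact Formula.realize_inf

lemma sat_not {M : Type} [LinearOrder M] {c : ι → Set M} {τ : Type}
    {φ : (CLOLang ι).Formula τ} {v : τ → M} :
    Sat M c φ.not v ↔ ¬ Sat M c φ v := by
  letI := CLOStr ι M c
  exact Formula.realize_not

lemma sat_top {M : Type} [LinearOrder M] {c : ι → Set M} {τ : Type} {v : τ → M} :
    Sat M c (⊤ : (CLOLang ι).Formula τ) v := by
  letI := CLOStr ι M c
  exact Formula.realize_top.2 trivial

end FVInfra
section FVLists

variable {ι : Type}

/-- Semantics of a finite "Feferman–Vaught decomposition" list. -/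
def SatL {γ δ α β : Type} [LinearOrder α] [LinearOrder β] (ca : ι → Set α) (cb : ι → Set β)
    (l : List ((CLOLang ι).Formula γ × (CLOLang ι).Formula δ)) (va : γ → α) (vb : δ → β) :
    Prop :=
  ∃ pr ∈ l, Sat α ca pr.1 va ∧ Sat β cb pr.2 vb

variable {γ δ : Type}

/-- List-level negation. -/
def notL (l : List ((CLOLang ι).Formula γ × (CLOLang ι).Formula δ)) :
    List ((CLOLang ι).Formula γ × (CLOLang ι).Formula δ) :=
  l.foldr
    (fun pr acc =>
      ([(pr.1.not, (⊤ : (CLOLang ι).Formula δ)), ((⊤ : (CLOLang ι).Formula γ), pr.2.not)].flatMap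
        fun c => acc.map fun q => (c.1 ⊓ q.1, c.2 ⊓ q.2)))
    [(⊤, ⊤)]

/-- List-level conjunction. -/
def andL (l₁ l₂ : List ((CLOLang ι).Formula γ × (CLOLang ι).Formula δ)) :
    List ((CLOLang ι).Formula γ × (CLOLang ι).Formula δ) :=
  l₁.flatMap fun p => l₂.map fun q => (p.1 ⊓ q.1, p.2 ⊓ q.2)

variable {α β : Type} [LinearOrder α] [LinearOrder β] {ca : ι → Set α} {cb : ι → Set β}

lemma satL_notL {l : List ((CLOLang ι).Formula γ × (CLOLang ι).Formula δ)}
    {va : γ → α} {vb : δ → β} :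
    SatL ca cb (notL l) va vb ↔ ¬ SatL ca cb l va vb := by
  induction l with
  | nil =>
    simp [SatL, notL, sat_top]
  | cons pr rest ih =>
    have hstep : notL (pr :: rest) =
        ([(pr.1.not, (⊤ : (CLOLang ι).Formula δ)), ((⊤ : (CLOLang ι).Formula γ), pr.2.not)].flatMap
          fun c => (notL rest).map fun q => (c.1 ⊓ q.1, c.2 ⊓ q.2)) := rfl
    rw [hstep]
    simp only [SatL, List.mem_flatMap, List.mem_map, List.mem_cons, List.mem_singleton] at *
    constructor
    · rintro ⟨x, ⟨c, (hc | hc | hc), q, hq, rfl⟩, hx1, hx2⟩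
      · rcases hc with rfl
        rw [sat_inf] at hx1 hx2
        rw [sat_not] at hx1
        rintro ⟨y, (rfl | hy), hy1, hy2⟩
        · exact hx1.1 hy1
        · exact ih.1 ⟨q, hq, hx1.2, hx2.2⟩ ⟨y, hy, hy1, hy2⟩
      · rcases hc with rfl
        rw [sat_inf] at hx1 hx2
        rw [sat_not] at hx2
        rintro ⟨y, (rfl | hy), hy1, hy2⟩
        · exact hx2.1 hy2
        · exact ih.1 ⟨q, hq, hx1.2, hx2.2⟩ ⟨y, hy, hy1, hy2⟩
      · exact absurd hc (by simp)
    · intro h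
      have hpr : ¬ (Sat α ca pr.1 va ∧ Sat β cb pr.2 vb) := fun hc =>
        h ⟨pr, Or.inl rfl, hc⟩
      have hrest : ¬ SatL ca cb rest va vb := fun hc => by
        obtain ⟨y, hy, hy1, hy2⟩ := hc
        exact h ⟨y, Or.inr hy, hy1, hy2⟩
      obtain ⟨q, hq, hq1, hq2⟩ := ih.2 hrest
      by_cases hh : Sat α ca pr.1 va
      · have h2 : ¬ Sat β cb pr.2 vb := fun hc => hpr ⟨hh, hc⟩
        refine ⟨((⊤ : (CLOLang ι).Formula γ) ⊓ q.1, pr.2.not ⊓ q.2),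
          ⟨((⊤ : (CLOLang ι).Formula γ), pr.2.not), by simp, q, hq, rfl⟩, ?_, ?_⟩
        · rw [sat_inf]; exact ⟨sat_top, hq1⟩
        · rw [sat_inf, sat_not]; exact ⟨h2, hq2⟩
      · refine ⟨(pr.1.not ⊓ q.1, (⊤ : (CLOLang ι).Formula δ) ⊓ q.2),
          ⟨(pr.1.not, (⊤ : (CLOLang ι).Formula δ)), by simp, q, hq, rfl⟩, ?_, ?_⟩
        · rw [sat_inf, sat_not]; exact ⟨hh, hq1⟩
        · rw [sat_inf]; exact ⟨sat_top, hq2⟩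

lemma satL_andL {l₁ l₂ : List ((CLOLang ι).Formula γ × (CLOLang ι).Formula δ)}
    {va : γ → α} {vb : δ → β} :
    SatL ca cb (andL l₁ l₂) va vb ↔ SatL ca cb l₁ va vb ∧ SatL ca cb l₂ va vb := by
  simp only [SatL, andL, List.mem_flatMap, List.mem_map]
  constructor
  · rintro ⟨x, ⟨p, hp, q, hq, rfl⟩, h1, h2⟩
    rw [sat_inf] at h1 h2
    exact ⟨⟨p, hp, h1.1, h2.1⟩, ⟨q, hq, h1.2, h2.2⟩⟩
  · rintro ⟨⟨p, hp, hp1, hp2⟩, ⟨q, hq, hq1, hq2⟩⟩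
    exact ⟨(p.1 ⊓ q.1, p.2 ⊓ q.2), ⟨p, hp, q, hq, rfl⟩,
      sat_inf.2 ⟨hp1, hq1⟩, sat_inf.2 ⟨hp2, hq2⟩⟩

lemma satL_append {l₁ l₂ : List ((CLOLang ι).Formula γ × (CLOLang ι).Formula δ)}
    {va : γ → α} {vb : δ → β} :
    SatL ca cb (l₁ ++ l₂) va vb ↔ SatL ca cb l₁ va vb ∨ SatL ca cb l₂ va vb := by
  simp only [SatL, List.mem_append]
  constructor
  · rintro ⟨x, (hx | hx), h1, h2⟩
    · exact Or.inl ⟨x, hx, h1, h2⟩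
    · exact Or.inr ⟨x, hx, h1, h2⟩
  · rintro (⟨x, hx, h1, h2⟩ | ⟨x, hx, h1, h2⟩)
    · exact ⟨x, Or.inl hx, h1, h2⟩
    · exact ⟨x, Or.inr hx, h1, h2⟩

end FVLists

section ExU

variable {ι : Type}

/-- Existential quantification of the `Unit`-variable of a formula. -/
def exU {γ : Type} (φ : (CLOLang ι).Formula (γ ⊕ Unit)) : (CLOLang ι).Formula γ :=
  (BoundedFormula.relabel (Sum.elim Sum.inl (fun _ => Sum.inr (0 : Fin 1))) φ).ex

lemma sat_exU {γ α : Type} [LinearOrder α] {ca : ι → Set α}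
    {φ : (CLOLang ι).Formula (γ ⊕ Unit)} {va : γ → α} :
    Sat α ca (exU φ) va ↔ ∃ a : α, Sat α ca φ (Sum.elim va fun _ => a) := by
  letI := CLOStr ι α ca
  show (BoundedFormula.relabel _ φ).ex.Realize va default ↔ _
  rw [BoundedFormula.realize_ex]
  refine exists_congr fun a => ?_
  rw [BoundedFormula.realize_relabel]
  have h1 : (Fin.snoc (default : Fin 0 → α) a ∘ Fin.natAdd 1 : Fin 0 → α) = default :=
    funext fun k => k.elim0
  rw [h1]
  have h2 : (Sum.elim va ((Fin.snoc (default : Fin 0 → α) a : Fin 1 → α) ∘ Fin.castAdd 0) ∘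
      (Sum.elim Sum.inl (fun _ => Sum.inr (0 : Fin 1)) : γ ⊕ Unit → γ ⊕ Fin 1)) =
      (Sum.elim va (fun _ => a) : γ ⊕ Unit → α) := by
    funext x
    cases x with
    | inl g => rfl
    | inr u => simp [Fin.snoc]
  rw [h2]
  exact Iff.rfl

end ExU
section RelHelp

variable {ι : Type}

lemma satBF_rel {M : Type} [LinearOrder M] {c : ι → Set M} {τ : Type} {n k : ℕ}
    (R : CLORel ι k) (ts : Fin k → (CLOLang ι).Term (τ ⊕ Fin n)) (v : τ → M) (xs : Fin n → M) :
    SatBF M c (BoundedFormula.rel (L := CLOLang ι) R ts) v xs ↔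
      cloRelMap c R fun i =>
        @Term.realize (CLOLang ι) M (CLOStr ι M c) _ (Sum.elim v xs) (ts i) :=
  Iff.rfl

lemma clo_lt {M : Type} [LinearOrder M] {c : ι → Set M} (w : Fin 2 → M) :
    cloRelMap c CLORel.lt w ↔ w 0 < w 1 :=
  Iff.rfl

lemma clo_color {M : Type} [LinearOrder M] {c : ι → Set M} (i : ι) (w : Fin 1 → M) :
    cloRelMap c (CLORel.color i) w ↔ w 0 ∈ c i :=
  Iff.rfl

end RelHelp
section FVCore

variable {ι : Type}

/-- Merge of assignments into the two parts of a lexicographic sum. -/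
def mrg {γ δ α β : Type} (va : γ → α) (vb : δ → β) : γ ⊕ δ → α ⊕ₗ β :=
  Sum.elim (fun g => toLex (Sum.inl (va g))) (fun d => toLex (Sum.inr (vb d)))

/-- Atomic formula `x < y`. -/
def ltF {γ : Type} (x y : γ) : (CLOLang ι).Formula γ :=
  Relations.formula (L := CLOLang ι) CLORel.lt ![Term.var x, Term.var y]

/-- Atomic formula `P_i x`. -/
def colorF {γ : Type} (i : ι) (x : γ) : (CLOLang ι).Formula γ :=
  Relations.formula (L := CLOLang ι) (CLORel.color i) ![Term.var x]

lemma sat_ltF {α γ : Type} [LinearOrder α] {ca : ι → Set α} {x y : γ} {va : γ → α} :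
    Sat α ca (ltF x y) va ↔ va x < va y := by
  letI := CLOStr ι α ca
  show (Relations.formula _ _).Realize va ↔ _
  exact Iff.rfl

lemma sat_colorF {α γ : Type} [LinearOrder α] {ca : ι → Set α} {i : ι} {x : γ} {va : γ → α} :
    Sat α ca (colorF i x) va ↔ va x ∈ ca i := by
  letI := CLOStr ι α ca
  show (Relations.formula _ _).Realize va ↔ _
  exact Iff.rfl

lemma sat_eqF {α γ : Type} [LinearOrder α] {ca : ι → Set α} {x y : γ} {va : γ → α} :
    Sat α ca (Term.equal (L := CLOLang ι) (Term.var x) (Term.var y)) va ↔ va x = va y := by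
  letI := CLOStr ι α ca
  show (Term.equal _ _).Realize va ↔ _
  rw [Formula.realize_equal]
  exact Iff.rfl

/-- List-level universal quantification over the left summand. -/
def allLeftL {γ δ : Type}
    (l : List ((CLOLang ι).Formula (γ ⊕ Unit) × (CLOLang ι).Formula δ)) :
    List ((CLOLang ι).Formula γ × (CLOLang ι).Formula δ) :=
  notL ((notL l).map fun pr => (exU pr.1, pr.2))

/-- List-level universal quantification over the right summand. -/
def allRightL {γ δ : Type}
    (l : List ((CLOLang ι).Formula γ × (CLOLang ι).Formula (δ ⊕ Unit))) :
    List ((CLOLang ι).Formula γ × (CLOLang ι).Formula δ) :=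
  notL ((notL l).map fun pr => (pr.1, exU pr.2))

lemma satL_allLeftL {γ δ α β : Type} [LinearOrder α] [LinearOrder β]
    {ca : ι → Set α} {cb : ι → Set β}
    {l : List ((CLOLang ι).Formula (γ ⊕ Unit) × (CLOLang ι).Formula δ)}
    {va : γ → α} {vb : δ → β} :
    SatL ca cb (allLeftL l) va vb ↔ ∀ a : α, SatL ca cb l (Sum.elim va fun _ => a) vb := by
  rw [allLeftL, satL_notL]
  have : SatL ca cb ((notL l).map fun pr => (exU pr.1, pr.2)) va vb ↔
      ∃ a : α, SatL ca cb (notL l) (Sum.elim va fun _ => a) vb := by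
    simp only [SatL, List.mem_map]
    constructor
    · rintro ⟨x, ⟨pr, hpr, rfl⟩, h1, h2⟩
      obtain ⟨a, ha⟩ := sat_exU.1 h1
      exact ⟨a, pr, hpr, ha, h2⟩
    · rintro ⟨a, pr, hpr, h1, h2⟩
      exact ⟨(exU pr.1, pr.2), ⟨pr, hpr, rfl⟩, sat_exU.2 ⟨a, h1⟩, h2⟩
  rw [this]
  push_neg
  refine forall_congr' fun a => ?_
  rw [satL_notL, not_not]

lemma satL_allRightL {γ δ α β : Type} [LinearOrder α] [LinearOrder β]
    {ca : ι → Set α} {cb : ι → Set β}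
    {l : List ((CLOLang ι).Formula γ × (CLOLang ι).Formula (δ ⊕ Unit))}
    {va : γ → α} {vb : δ → β} :
    SatL ca cb (allRightL l) va vb ↔ ∀ b : β, SatL ca cb l va (Sum.elim vb fun _ => b) := by
  rw [allRightL, satL_notL]
  have : SatL ca cb ((notL l).map fun pr => (pr.1, exU pr.2)) va vb ↔
      ∃ b : β, SatL ca cb (notL l) va (Sum.elim vb fun _ => b) := by
    simp only [SatL, List.mem_map]
    constructor
    · rintro ⟨x, ⟨pr, hpr, rfl⟩, h1, h2⟩
      obtain ⟨b, hb⟩ := sat_exU.1 h2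
      exact ⟨b, pr, hpr, h1, hb⟩
    · rintro ⟨b, pr, hpr, h1, h2⟩
      exact ⟨(pr.1, exU pr.2), ⟨pr, hpr, rfl⟩, h1, sat_exU.2 ⟨b, h2⟩⟩
  rw [this]
  push_neg
  refine forall_congr' fun b => ?_
  rw [satL_notL, not_not]

lemma forall_lex_sum {α β : Type} (P : α ⊕ₗ β → Prop) :
    (∀ x : α ⊕ₗ β, P x) ↔ (∀ a : α, P (toLex (Sum.inl a))) ∧ (∀ b : β, P (toLex (Sum.inr b))) := by
  constructor
  · intro h
    exact ⟨fun a => h _, fun b => h _⟩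
  · rintro ⟨h1, h2⟩ x
    rcases x with a | b
    · exact h1 a
    · exact h2 b

lemma mrg_lift {γ δ α β : Type} (va : γ → α) (vb : δ → β) (a : α) (z : γ ⊕ δ) :
    mrg (Sum.elim va fun _ : Unit => a) vb (Sum.map Sum.inl id z) = mrg va vb z := by
  cases z <;> rfl

lemma mrg_liftR {γ δ α β : Type} (va : γ → α) (vb : δ → β) (b : β) (z : γ ⊕ δ) :
    mrg va (Sum.elim vb fun _ : Unit => b) (Sum.map id Sum.inl z) = mrg va vb z := by
  cases z <;> rfl

/-- The Feferman–Vaught decomposition for binary lexicographic sums of CLOs. -/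
theorem FV {τ : Type} : ∀ {n : ℕ} (φ : (CLOLang ι).BoundedFormula τ n) (γ δ : Type)
    (f : τ ⊕ Fin n → γ ⊕ δ),
    ∃ l : List ((CLOLang ι).Formula γ × (CLOLang ι).Formula δ),
      ∀ (α β : Type) [LinearOrder α] [LinearOrder β]
        (ca : ι → Set α) (cb : ι → Set β) (va : γ → α) (vb : δ → β),
        SatBF (α ⊕ₗ β) (sumColor2 ca cb) φ
            (fun t => mrg va vb (f (Sum.inl t))) (fun k => mrg va vb (f (Sum.inr k)))
          ↔ SatL ca cb l va vb := by
  intro n φ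
  induction φ with
  | falsum =>
    intro γ δ f
    refine ⟨[], fun α β _ _ ca cb va vb => iff_of_false (fun h => h) ?_⟩
    rintro ⟨x, hx, -⟩
    exact absurd hx List.not_mem_nil
  | @equal n t₁ t₂ =>
    intro γ δ f
    have key : ∀ (α β : Type) [LinearOrder α] [LinearOrder β]
        (ca : ι → Set α) (cb : ι → Set β) (va : γ → α) (vb : δ → β),
        SatBF (α ⊕ₗ β) (sumColor2 ca cb) (BoundedFormula.equal t₁ t₂)
            (fun t => mrg va vb (f (Sum.inl t))) (fun k => mrg va vb (f (Sum.inr k)))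
          ↔ mrg va vb (f (tmVar t₁)) = mrg va vb (f (tmVar t₂)) := by
      intro α β _ _ ca cb va vb
      letI := CLOStr ι (α ⊕ₗ β) (sumColor2 ca cb)
      have hel : (Sum.elim (fun t => mrg va vb (f (Sum.inl t)))
          (fun k => mrg va vb (f (Sum.inr k))) : τ ⊕ Fin n → α ⊕ₗ β) =
          fun y => mrg va vb (f y) := by
        funext y; rcases y with t | k <;> rfl
      show t₁.realize _ = t₂.realize _ ↔ _
      rw [hel, tmVar_realize, tmVar_realize]
    rcases h₁ : f (tmVar t₁) with g₁ | d₁ <;> rcases h₂ : f (tmVar t₂) with g₂ | d₂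
    · refine ⟨[(Term.equal (Term.var g₁) (Term.var g₂), ⊤)],
        fun α β _ _ ca cb va vb => ?_⟩
      rw [key, h₁, h₂]
      simp only [SatL, List.mem_singleton]
      constructor
      · intro h
        refine ⟨_, rfl, sat_eqF.2 ?_, sat_top⟩
        simpa [mrg] using h
      · rintro ⟨x, rfl, hx, -⟩
        have := sat_eqF.1 hx
        simp [mrg, this]
    · refine ⟨[], fun α β _ _ ca cb va vb => ?_⟩
      rw [key, h₁, h₂]
      constructor
      · intro h
        exact absurd h (by simp [mrg])
      · rintro ⟨x, hx, -⟩
        exact absurd hx List.not_mem_nil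
    · refine ⟨[], fun α β _ _ ca cb va vb => ?_⟩
      rw [key, h₁, h₂]
      constructor
      · intro h
        exact absurd h (by simp [mrg])
      · rintro ⟨x, hx, -⟩
        exact absurd hx List.not_mem_nil
    · refine ⟨[((⊤ : (CLOLang ι).Formula γ), Term.equal (Term.var d₁) (Term.var d₂))],
        fun α β _ _ ca cb va vb => ?_⟩
      rw [key, h₁, h₂]
      simp only [SatL, List.mem_singleton]
      constructor
      · intro h
        refine ⟨_, rfl, sat_top, sat_eqF.2 ?_⟩
        simpa [mrg] using h
      · rintro ⟨x, rfl, -, hx⟩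
        have := sat_eqF.1 hx
        simp [mrg, this]
  | @rel n k R ts =>
    intro γ δ f
    have hel : ∀ (α β : Type) [LinearOrder α] [LinearOrder β] (va : γ → α) (vb : δ → β),
        (Sum.elim (fun t => mrg va vb (f (Sum.inl t)))
          (fun k => mrg va vb (f (Sum.inr k))) : τ ⊕ Fin n → α ⊕ₗ β) =
          fun y => mrg va vb (f y) := by
      intro α β _ _ va vb
      funext y; rcases y with t | k <;> rfl
    cases R with
    | lt =>
      have key : ∀ (α β : Type) [LinearOrder α] [LinearOrder β]
          (ca : ι → Set α) (cb : ι → Set β) (va : γ → α) (vb : δ → β),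
          SatBF (α ⊕ₗ β) (sumColor2 ca cb) (BoundedFormula.rel CLORel.lt ts)
              (fun t => mrg va vb (f (Sum.inl t))) (fun k => mrg va vb (f (Sum.inr k)))
            ↔ mrg va vb (f (tmVar (ts 0))) < mrg va vb (f (tmVar (ts 1))) := by
        intro α β _ _ ca cb va vb
        rw [satBF_rel]
        simp only [clo_lt, tmVar_realize, hel α β va vb]
      rcases h₁ : f (tmVar (ts 0)) with g₁ | d₁ <;> rcases h₂ : f (tmVar (ts 1)) with g₂ | d₂
      · refine ⟨[(ltF g₁ g₂, ⊤)], fun α β _ _ ca cb va vb => ?_⟩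
        rw [key, h₁, h₂]
        simp only [SatL, List.mem_singleton]
        constructor
        · intro h
          refine ⟨_, rfl, sat_ltF.2 ?_, sat_top⟩
          simpa [mrg, Sum.Lex.inl_lt_inl_iff] using h
        · rintro ⟨x, rfl, hx, -⟩
          have := sat_ltF.1 hx
          simpa [mrg, Sum.Lex.inl_lt_inl_iff]
      · refine ⟨[((⊤ : (CLOLang ι).Formula γ), (⊤ : (CLOLang ι).Formula δ))],
          fun α β _ _ ca cb va vb => ?_⟩
        rw [key, h₁, h₂]
        constructor
        · intro _
          exact ⟨_, List.mem_singleton_self _, sat_top, sat_top⟩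
        · intro _
          exact Sum.Lex.inl_lt_inr _ _
      · refine ⟨[], fun α β _ _ ca cb va vb => ?_⟩
        rw [key, h₁, h₂]
        constructor
        · intro h
          exact absurd h (Sum.Lex.not_inr_lt_inl)
        · rintro ⟨x, hx, -⟩
          exact absurd hx List.not_mem_nil
      · refine ⟨[((⊤ : (CLOLang ι).Formula γ), ltF d₁ d₂)], fun α β _ _ ca cb va vb => ?_⟩
        rw [key, h₁, h₂]
        simp only [SatL, List.mem_singleton]
        constructor
        · intro h
          refine ⟨_, rfl, sat_top, sat_ltF.2 ?_⟩
          simpa [mrg, Sum.Lex.inr_lt_inr_iff] using h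
        · rintro ⟨x, rfl, -, hx⟩
          have := sat_ltF.1 hx
          simpa [mrg, Sum.Lex.inr_lt_inr_iff]
    | color i =>
      have key : ∀ (α β : Type) [LinearOrder α] [LinearOrder β]
          (ca : ι → Set α) (cb : ι → Set β) (va : γ → α) (vb : δ → β),
          SatBF (α ⊕ₗ β) (sumColor2 ca cb) (BoundedFormula.rel (CLORel.color i) ts)
              (fun t => mrg va vb (f (Sum.inl t))) (fun k => mrg va vb (f (Sum.inr k)))
            ↔ mrg va vb (f (tmVar (ts 0))) ∈ sumColor2 ca cb i := by
        intro α β _ _ ca cb va vb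
        rw [satBF_rel]
        simp only [clo_color, tmVar_realize, hel α β va vb]
      rcases h₁ : f (tmVar (ts 0)) with g₁ | d₁
      · refine ⟨[(colorF i g₁, ⊤)], fun α β _ _ ca cb va vb => ?_⟩
        rw [key, h₁]
        simp only [SatL, List.mem_singleton]
        constructor
        · intro h
          exact ⟨_, rfl, sat_colorF.2 h, sat_top⟩
        · rintro ⟨x, rfl, hx, -⟩
          exact sat_colorF.1 hx
      · refine ⟨[((⊤ : (CLOLang ι).Formula γ), colorF i d₁)], fun α β _ _ ca cb va vb => ?_⟩
        rw [key, h₁]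
        simp only [SatL, List.mem_singleton]
        constructor
        · intro h
          exact ⟨_, rfl, sat_top, sat_colorF.2 h⟩
        · rintro ⟨x, rfl, -, hx⟩
          exact sat_colorF.1 hx
  | @imp n φ₁ φ₂ ih₁ ih₂ =>
    intro γ δ f
    obtain ⟨l₁, h₁⟩ := ih₁ γ δ f
    obtain ⟨l₂, h₂⟩ := ih₂ γ δ f
    refine ⟨notL l₁ ++ l₂, fun α β _ _ ca cb va vb => ?_⟩
    rw [satL_append, satL_notL, ← h₁ α β ca cb va vb, ← h₂ α β ca cb va vb]
    exact imp_iff_not_or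
  | @all n φ ih =>
    intro γ δ f
    obtain ⟨l₀, h₀⟩ := ih (γ ⊕ Unit) δ
      (Sum.elim (fun t => Sum.map Sum.inl id (f (Sum.inl t)))
        (Fin.snoc (fun j => Sum.map Sum.inl id (f (Sum.inr j))) (Sum.inl (Sum.inr ()))))
    obtain ⟨l₁, h₁⟩ := ih γ (δ ⊕ Unit)
      (Sum.elim (fun t => Sum.map id Sum.inl (f (Sum.inl t)))
        (Fin.snoc (fun j => Sum.map id Sum.inl (f (Sum.inr j))) (Sum.inr (Sum.inr ()))))
    refine ⟨andL (allLeftL l₀) (allRightL l₁), fun α β _ _ ca cb va vb => ?_⟩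
    rw [satL_andL, satL_allLeftL, satL_allRightL]
    have hall : SatBF (α ⊕ₗ β) (sumColor2 ca cb) φ.all
        (fun t => mrg va vb (f (Sum.inl t))) (fun k => mrg va vb (f (Sum.inr k)))
      ↔ ∀ x : α ⊕ₗ β, SatBF (α ⊕ₗ β) (sumColor2 ca cb) φ
          (fun t => mrg va vb (f (Sum.inl t)))
          (Fin.snoc (fun k => mrg va vb (f (Sum.inr k))) x) := Iff.rfl
    rw [hall, forall_lex_sum]
    constructor
    · rintro ⟨hL, hR⟩
      constructor
      · intro a
        rw [← h₀ α β ca cb (Sum.elim va fun _ => a) vb]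
        have ea : (fun t => mrg (Sum.elim va fun _ : Unit => a) vb
            ((Sum.elim (fun t => Sum.map Sum.inl id (f (Sum.inl t)))
              (Fin.snoc (fun j => Sum.map Sum.inl id (f (Sum.inr j)))
                (Sum.inl (Sum.inr ())))) (Sum.inl t))) =
            (fun t => mrg va vb (f (Sum.inl t))) := by
          funext t
          exact mrg_lift va vb a _
        have eb : (fun k : Fin (n + 1) => mrg (Sum.elim va fun _ : Unit => a) vb
            ((Sum.elim (fun t => Sum.map Sum.inl id (f (Sum.inl t)))
              (Fin.snoc (fun j => Sum.map Sum.inl id (f (Sum.inr j)))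
                (Sum.inl (Sum.inr ())))) (Sum.inr k))) =
            Fin.snoc (fun k => mrg va vb (f (Sum.inr k))) (toLex (Sum.inl a)) := by
          funext k
          refine Fin.lastCases ?_ (fun j => ?_) k
          · simp only [Sum.elim_inr, Fin.snoc_last]
            rfl
          · simp only [Sum.elim_inr, Fin.snoc_castSucc]
            exact mrg_lift va vb a _
        rw [ea, eb]
        exact hL a
      · intro b
        rw [← h₁ α β ca cb va (Sum.elim vb fun _ => b)]
        have ea : (fun t => mrg va (Sum.elim vb fun _ : Unit => b)
            ((Sum.elim (fun t => Sum.map id Sum.inl (f (Sum.inl t)))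
              (Fin.snoc (fun j => Sum.map id Sum.inl (f (Sum.inr j)))
                (Sum.inr (Sum.inr ())))) (Sum.inl t))) =
            (fun t => mrg va vb (f (Sum.inl t))) := by
          funext t
          exact mrg_liftR va vb b _
        have eb : (fun k : Fin (n + 1) => mrg va (Sum.elim vb fun _ : Unit => b)
            ((Sum.elim (fun t => Sum.map id Sum.inl (f (Sum.inl t)))
              (Fin.snoc (fun j => Sum.map id Sum.inl (f (Sum.inr j)))
                (Sum.inr (Sum.inr ())))) (Sum.inr k))) =
            Fin.snoc (fun k => mrg va vb (f (Sum.inr k))) (toLex (Sum.inr b)) := by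
          funext k
          refine Fin.lastCases ?_ (fun j => ?_) k
          · simp only [Sum.elim_inr, Fin.snoc_last]
            rfl
          · simp only [Sum.elim_inr, Fin.snoc_castSucc]
            exact mrg_liftR va vb b _
        rw [ea, eb]
        exact hR b
    · rintro ⟨hL, hR⟩
      constructor
      · intro a
        have := (h₀ α β ca cb (Sum.elim va fun _ => a) vb).2 (hL a)
        have ea : (fun t => mrg (Sum.elim va fun _ : Unit => a) vb
            ((Sum.elim (fun t => Sum.map Sum.inl id (f (Sum.inl t)))
              (Fin.snoc (fun j => Sum.map Sum.inl id (f (Sum.inr j)))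
                (Sum.inl (Sum.inr ())))) (Sum.inl t))) =
            (fun t => mrg va vb (f (Sum.inl t))) := by
          funext t
          exact mrg_lift va vb a _
        have eb : (fun k : Fin (n + 1) => mrg (Sum.elim va fun _ : Unit => a) vb
            ((Sum.elim (fun t => Sum.map Sum.inl id (f (Sum.inl t)))
              (Fin.snoc (fun j => Sum.map Sum.inl id (f (Sum.inr j)))
                (Sum.inl (Sum.inr ())))) (Sum.inr k))) =
            Fin.snoc (fun k => mrg va vb (f (Sum.inr k))) (toLex (Sum.inl a)) := by
          funext k
          refine Fin.lastCases ?_ (fun j => ?_) k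
          · simp only [Sum.elim_inr, Fin.snoc_last]
            rfl
          · simp only [Sum.elim_inr, Fin.snoc_castSucc]
            exact mrg_lift va vb a _
        rw [ea, eb] at this
        exact this
      · intro b
        have := (h₁ α β ca cb va (Sum.elim vb fun _ => b)).2 (hR b)
        have ea : (fun t => mrg va (Sum.elim vb fun _ : Unit => b)
            ((Sum.elim (fun t => Sum.map id Sum.inl (f (Sum.inl t)))
              (Fin.snoc (fun j => Sum.map id Sum.inl (f (Sum.inr j)))
                (Sum.inr (Sum.inr ())))) (Sum.inl t))) =
            (fun t => mrg va vb (f (Sum.inl t))) := by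
          funext t
          exact mrg_liftR va vb b _
        have eb : (fun k : Fin (n + 1) => mrg va (Sum.elim vb fun _ : Unit => b)
            ((Sum.elim (fun t => Sum.map id Sum.inl (f (Sum.inl t)))
              (Fin.snoc (fun j => Sum.map id Sum.inl (f (Sum.inr j)))
                (Sum.inr (Sum.inr ())))) (Sum.inr k))) =
            Fin.snoc (fun k => mrg va vb (f (Sum.inr k))) (toLex (Sum.inr b)) := by
          funext k
          refine Fin.lastCases ?_ (fun j => ?_) k
          · simp only [Sum.elim_inr, Fin.snoc_last]
            rfl
          · simp only [Sum.elim_inr, Fin.snoc_castSucc]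
            exact mrg_liftR va vb b _
        rw [ea, eb] at this
        exact this

end FVCore
section AllOfList

variable {ι : Type}

/-- A one-variable formula as a bounded formula with one bound variable. -/
def toBF1 (ψ : (CLOLang ι).Formula Unit) : (CLOLang ι).BoundedFormula Empty 1 :=
  BoundedFormula.relabel (fun _ : Unit => Sum.inr (0 : Fin 1)) ψ

lemma satBF_toBF1 {M : Type} [LinearOrder M] {c : ι → Set M} {ψ : (CLOLang ι).Formula Unit}
    {v : Empty → M} {xs : Fin 1 → M} :
    SatBF M c (toBF1 ψ) v xs ↔ Sat M c ψ (fun _ => xs 0) := by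
  letI := CLOStr ι M c
  show (BoundedFormula.relabel _ ψ).Realize v xs ↔ _
  rw [BoundedFormula.realize_relabel]
  have h1 : (xs ∘ Fin.natAdd 1 : Fin 0 → M) = default := funext fun k => k.elim0
  rw [h1]
  have h2 : (Sum.elim v (xs ∘ Fin.castAdd 0) ∘ (fun _ : Unit => Sum.inr (0 : Fin 1)) :
      Unit → M) = fun _ => xs 0 := by
    funext u
    show xs (Fin.castAdd 0 0) = xs 0
    congr 1
  rw [h2]
  exact Iff.rfl

/-- The sentence `∀ x, ⋁_{ψ ∈ L} ψ(x)`. -/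
def allOfList (L : List ((CLOLang ι).Formula Unit)) : (CLOLang ι).Formula Empty :=
  BoundedFormula.all ((L.map toBF1).foldr (· ⊔ ·) ⊥)

lemma sat_allOfList {M : Type} [LinearOrder M] {c : ι → Set M}
    {L : List ((CLOLang ι).Formula Unit)} :
    Sat M c (allOfList L) default ↔ ∀ x : M, ∃ ψ ∈ L, Sat M c ψ (fun _ => x) := by
  letI := CLOStr ι M c
  show (BoundedFormula.all _).Realize default default ↔ _
  rw [BoundedFormula.realize_all]
  refine forall_congr' fun x => ?_
  rw [BoundedFormula.realize_foldr_sup]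
  constructor
  · rintro ⟨θ, hθ, hreal⟩
    obtain ⟨ψ, hψ, rfl⟩ := List.mem_map.1 hθ
    refine ⟨ψ, hψ, ?_⟩
    have := satBF_toBF1 (M := M) (c := c) (ψ := ψ)
      (v := (default : Empty → M)) (xs := Fin.snoc default x) |>.1 hreal
    simpa [Fin.snoc] using this
  · rintro ⟨ψ, hψ, hreal⟩
    refine ⟨toBF1 ψ, List.mem_map.2 ⟨ψ, hψ, rfl⟩, ?_⟩
    refine (satBF_toBF1 (v := (default : Empty → M)) (xs := Fin.snoc default x)).2 ?_
    have hx : (Fin.snoc (default : Fin 0 → M) x : Fin 1 → M) 0 = x := by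
      simp [Fin.snoc]
    rw [hx]
    exact hreal

end AllOfList
section Swaps

variable {ι : Type}

lemma satBF00 {M : Type} [LinearOrder M] {c : ι → Set M} {σ : (CLOLang ι).Formula Empty}
    {v : Empty → M} {xs : Fin 0 → M} :
    SatBF M c σ v xs ↔ Sat M c σ default := by
  rw [show v = (default : Empty → M) from funext fun e => e.elim,
    show xs = (default : Fin 0 → M) from funext fun k => k.elim0]
  exact (sat_iff_satBF default).symm

lemma sat_empty_congr {M : Type} [LinearOrder M] {c : ι → Set M}
    {σ : (CLOLang ι).Formula Empty} {v v' : Empty → M} :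
    Sat M c σ v ↔ Sat M c σ v' := by
  rw [show v = v' from funext fun e => e.elim]

lemma sent_swap_left {X Y Z : Type} [LinearOrder X] [LinearOrder Y] [LinearOrder Z]
    {cX : ι → Set X} {cY : ι → Set Y} {cZ : ι → Set Z}
    (hXY : ∀ σ : (CLOLang ι).Formula Empty, Sat X cX σ default ↔ Sat Y cY σ default)
    (σ : (CLOLang ι).Formula Empty) :
    Sat (X ⊕ₗ Z) (sumColor2 cX cZ) σ default ↔ Sat (Y ⊕ₗ Z) (sumColor2 cY cZ) σ default := by
  obtain ⟨l, hl⟩ := FV (τ := Empty) σ Empty Empty (Sum.elim Empty.elim Fin.elim0)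
  have h1 := hl X Z cX cZ default default
  have h2 := hl Y Z cY cZ default default
  rw [satBF00] at h1 h2
  rw [h1, h2]
  constructor
  · rintro ⟨pr, hpr, hx, hz⟩
    exact ⟨pr, hpr, (hXY pr.1).1 hx, hz⟩
  · rintro ⟨pr, hpr, hy, hz⟩
    exact ⟨pr, hpr, (hXY pr.1).2 hy, hz⟩

lemma param_swap_left {X Y Z : Type} [LinearOrder X] [LinearOrder Y] [LinearOrder Z]
    {cX : ι → Set X} {cY : ι → Set Y} {cZ : ι → Set Z}
    (hXY : ∀ σ : (CLOLang ι).Formula Empty, Sat X cX σ default ↔ Sat Y cY σ default)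
    (φ : (CLOLang ι).Formula Unit) (z : Z) :
    Sat (X ⊕ₗ Z) (sumColor2 cX cZ) φ (fun _ => toLex (Sum.inr z)) ↔
      Sat (Y ⊕ₗ Z) (sumColor2 cY cZ) φ (fun _ => toLex (Sum.inr z)) := by
  obtain ⟨l, hl⟩ := FV (τ := Unit) φ Empty Unit (fun _ => Sum.inr ())
  have h1 := hl X Z cX cZ default (fun _ => z)
  have h2 := hl Y Z cY cZ default (fun _ => z)
  have swap : SatL cX cZ l default (fun _ => z) ↔ SatL cY cZ l default (fun _ => z) := by
    constructor
    · rintro ⟨pr, hpr, hx, hz⟩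
      exact ⟨pr, hpr, (hXY pr.1).1 hx, hz⟩
    · rintro ⟨pr, hpr, hy, hz⟩
      exact ⟨pr, hpr, (hXY pr.1).2 hy, hz⟩
  exact ((sat_iff_satBF _).trans h1).trans (swap.trans ((sat_iff_satBF _).trans h2).symm)

lemma sent_swap_right {W X Y : Type} [LinearOrder W] [LinearOrder X] [LinearOrder Y]
    {cW : ι → Set W} {cX : ι → Set X} {cY : ι → Set Y}
    (hXY : ∀ σ : (CLOLang ι).Formula Empty, Sat X cX σ default ↔ Sat Y cY σ default)
    (σ : (CLOLang ι).Formula Empty) :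
    Sat (W ⊕ₗ X) (sumColor2 cW cX) σ default ↔ Sat (W ⊕ₗ Y) (sumColor2 cW cY) σ default := by
  obtain ⟨l, hl⟩ := FV (τ := Empty) σ Empty Empty (Sum.elim Empty.elim Fin.elim0)
  have h1 := hl W X cW cX default default
  have h2 := hl W Y cW cY default default
  rw [satBF00] at h1 h2
  rw [h1, h2]
  constructor
  · rintro ⟨pr, hpr, hw, hx⟩
    exact ⟨pr, hpr, hw, (hXY pr.2).1 hx⟩
  · rintro ⟨pr, hpr, hw, hy⟩
    exact ⟨pr, hpr, hw, (hXY pr.2).2 hy⟩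

lemma param_swap_right_leftparam {W X Y : Type} [LinearOrder W] [LinearOrder X] [LinearOrder Y]
    {cW : ι → Set W} {cX : ι → Set X} {cY : ι → Set Y}
    (hXY : ∀ σ : (CLOLang ι).Formula Empty, Sat X cX σ default ↔ Sat Y cY σ default)
    (φ : (CLOLang ι).Formula Unit) (w : W) :
    Sat (W ⊕ₗ X) (sumColor2 cW cX) φ (fun _ => toLex (Sum.inl w)) ↔
      Sat (W ⊕ₗ Y) (sumColor2 cW cY) φ (fun _ => toLex (Sum.inl w)) := by
  obtain ⟨l, hl⟩ := FV (τ := Unit) φ Unit Empty (fun _ => Sum.inl ())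
  have h1 := hl W X cW cX (fun _ => w) default
  have h2 := hl W Y cW cY (fun _ => w) default
  have swap : SatL cW cX l (fun _ => w) default ↔ SatL cW cY l (fun _ => w) default := by
    constructor
    · rintro ⟨pr, hpr, hw, hx⟩
      exact ⟨pr, hpr, hw, (hXY pr.2).1 hx⟩
    · rintro ⟨pr, hpr, hw, hy⟩
      exact ⟨pr, hpr, hw, (hXY pr.2).2 hy⟩
  exact ((sat_iff_satBF _).trans h1).trans (swap.trans ((sat_iff_satBF _).trans h2).symm)

lemma param_swap_right_rightparam {W X Y : Type} [LinearOrder W] [LinearOrder X] [LinearOrder Y]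
    {cW : ι → Set W} {cX : ι → Set X} {cY : ι → Set Y} {x : X} {y : Y}
    (hP : ∀ ψ : (CLOLang ι).Formula Unit,
      Sat X cX ψ (fun _ => x) ↔ Sat Y cY ψ (fun _ => y))
    (φ : (CLOLang ι).Formula Unit) :
    Sat (W ⊕ₗ X) (sumColor2 cW cX) φ (fun _ => toLex (Sum.inr x)) ↔
      Sat (W ⊕ₗ Y) (sumColor2 cW cY) φ (fun _ => toLex (Sum.inr y)) := by
  obtain ⟨l, hl⟩ := FV (τ := Unit) φ Empty Unit (fun _ => Sum.inr ())
  have h1 := hl W X cW cX default (fun _ => x)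
  have h2 := hl W Y cW cY default (fun _ => y)
  have swap : SatL cW cX l default (fun _ => x) ↔ SatL cW cY l default (fun _ => y) := by
    constructor
    · rintro ⟨pr, hpr, hw, hx⟩
      exact ⟨pr, hpr, hw, (hP pr.2).1 hx⟩
    · rintro ⟨pr, hpr, hw, hy⟩
      exact ⟨pr, hpr, hw, (hP pr.2).2 hy⟩
  exact ((sat_iff_satBF _).trans h1).trans (swap.trans ((sat_iff_satBF _).trans h2).symm)

end Swaps
theorem stmt2 {ι : Type} [Countable ι] {M D : Type} [LinearOrder M] [LinearOrder D]
    (cM : ι → Set M) (cD : ι → Set D)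
    (Φ : Set ((CLOLang ι).Formula Unit)) (B₁ B₂ : Set M)
    (hconv : (TypeSet ι M cM Φ).OrdConnected)
    (hcover : ∀ x : M, x ∈ B₁ ∨ x ∈ TypeSet ι M cM Φ ∨ x ∈ B₂)
    (h1C : ∀ x ∈ B₁, ∀ y ∈ TypeSet ι M cM Φ, x < y)
    (hC2 : ∀ y ∈ TypeSet ι M cM Φ, ∀ z ∈ B₂, y < z)
    (h12 : ∀ x ∈ B₁, ∀ z ∈ B₂, x < z)
    (hD : CLOEquiv ι D cD (↥(TypeSet ι M cM Φ)) (subColor cM (TypeSet ι M cM Φ))) :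
    CLOEquiv ι (↥B₁ ⊕ₗ (D ⊕ₗ ↥B₂))
        (sumColor2 (subColor cM B₁) (sumColor2 cD (subColor cM B₂))) M cM ∧
      ∀ x : ↥B₁ ⊕ₗ (D ⊕ₗ ↥B₂),
        x ∈ TypeSet ι (↥B₁ ⊕ₗ (D ⊕ₗ ↥B₂))
            (sumColor2 (subColor cM B₁) (sumColor2 cD (subColor cM B₂))) Φ ↔
          ∃ d : D, x = toLex (Sum.inr (toLex (Sum.inl d))) := by
  classical
  -- notation
  set C : Set M := TypeSet ι M cM Φ with hCdef
  -- the canonical map from the three-part decomposition back to M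
  let E : (↥B₁ ⊕ₗ (↥C ⊕ₗ ↥B₂)) → M :=
    fun x => Sum.elim (fun b : ↥B₁ => (b : M))
      (fun y : ↥C ⊕ₗ ↥B₂ =>
        Sum.elim (fun c : ↥C => (c : M)) (fun b : ↥B₂ => (b : M)) (ofLex y)) (ofLex x)
  have hEmono : StrictMono E := by
    rintro (a | (c | b)) (a' | (c' | b')) h
    · exact Subtype.coe_lt_coe.2 (Sum.Lex.inl_lt_inl_iff.1 h)
    · exact h1C _ a.2 _ c'.2
    · exact h12 _ a.2 _ b'.2
    · exact absurd h Sum.Lex.not_inr_lt_inl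
    · exact Subtype.coe_lt_coe.2
        (Sum.Lex.inl_lt_inl_iff.1 (Sum.Lex.inr_lt_inr_iff.1 h))
    · exact hC2 _ c.2 _ b'.2
    · exact absurd h Sum.Lex.not_inr_lt_inl
    · exact absurd (Sum.Lex.inr_lt_inr_iff.1 h) Sum.Lex.not_inr_lt_inl
    · exact Subtype.coe_lt_coe.2
        (Sum.Lex.inr_lt_inr_iff.1 (Sum.Lex.inr_lt_inr_iff.1 h))
  have hEsurj : Function.Surjective E := by
    intro x
    rcases hcover x with hx | hx | hx
    · exact ⟨toLex (Sum.inl ⟨x, hx⟩), rfl⟩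
    · exact ⟨toLex (Sum.inr (toLex (Sum.inl ⟨x, hx⟩))), rfl⟩
    · exact ⟨toLex (Sum.inr (toLex (Sum.inr ⟨x, hx⟩))), rfl⟩
  letI iSC : (CLOLang ι).Structure (↥B₁ ⊕ₗ (↥C ⊕ₗ ↥B₂)) :=
    CLOStr ι _ (sumColor2 (subColor cM B₁) (sumColor2 (subColor cM C) (subColor cM B₂)))
  letI iM : (CLOLang ι).Structure M := CLOStr ι M cM
  let e0 : (↥B₁ ⊕ₗ (↥C ⊕ₗ ↥B₂)) ≃ M := Equiv.ofBijective E ⟨hEmono.injective, hEsurj⟩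
  have hrel : ∀ {n : ℕ} (r : (CLOLang ι).Relations n) (x : Fin n → (↥B₁ ⊕ₗ (↥C ⊕ₗ ↥B₂))),
      @Structure.RelMap _ M iM n r (e0 ∘ x) ↔ @Structure.RelMap _ _ iSC n r x := by
    intro n r x
    cases r with
    | lt =>
      show E (x 0) < E (x 1) ↔ x 0 < x 1
      exact hEmono.lt_iff_lt
    | color i =>
      show E (x 0) ∈ cM i ↔ x 0 ∈
        sumColor2 (subColor cM B₁) (sumColor2 (subColor cM C) (subColor cM B₂)) i
      generalize x 0 = z
      rcases z with a | (c | b) <;> exact Iff.rfl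
  let g : @Language.Equiv (CLOLang ι) (↥B₁ ⊕ₗ (↥C ⊕ₗ ↥B₂)) M iSC iM :=
    { toEquiv := e0
      map_fun' := fun {n} f _ => Empty.elim f
      map_rel' := hrel }
  have hIso : ∀ (X : Type) (φ : (CLOLang ι).Formula X) (v : X → (↥B₁ ⊕ₗ (↥C ⊕ₗ ↥B₂))),
      Sat (↥B₁ ⊕ₗ (↥C ⊕ₗ ↥B₂))
          (sumColor2 (subColor cM B₁) (sumColor2 (subColor cM C) (subColor cM B₂))) φ v ↔
        Sat M cM φ (fun t => E (v t)) := by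
    intro X φ v
    exact (StrongHomClass.realize_formula g φ (v := v)).symm
  -- sentence transfer between C and D
  have hDD : ∀ σ : (CLOLang ι).Formula Empty,
      Sat (↥C) (subColor cM C) σ default ↔ Sat D cD σ default := by
    intro σ
    have h : @ElementarilyEquivalent (CLOLang ι) D (↥C) (CLOStr ι D cD)
        (CLOStr ι (↥C) (subColor cM C)) := hD
    letI iD : (CLOLang ι).Structure D := CLOStr ι D cD
    letI iC : (CLOLang ι).Structure (↥C) := CLOStr ι (↥C) (subColor cM C)
    exact (elementarilyEquivalent_iff.1 h σ).symm
  -- inner sentence swap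
  have hInnSent : ∀ σ : (CLOLang ι).Formula Empty,
      Sat (↥C ⊕ₗ ↥B₂) (sumColor2 (subColor cM C) (subColor cM B₂)) σ default ↔
        Sat (D ⊕ₗ ↥B₂) (sumColor2 cD (subColor cM B₂)) σ default :=
    sent_swap_left hDD
  -- outer sentence swap
  have hOutSent : ∀ σ : (CLOLang ι).Formula Empty,
      Sat (↥B₁ ⊕ₗ (↥C ⊕ₗ ↥B₂))
          (sumColor2 (subColor cM B₁) (sumColor2 (subColor cM C) (subColor cM B₂))) σ default ↔
        Sat (↥B₁ ⊕ₗ (D ⊕ₗ ↥B₂))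
          (sumColor2 (subColor cM B₁) (sumColor2 cD (subColor cM B₂))) σ default :=
    sent_swap_right hInnSent
  constructor
  · -- elementary equivalence
    letI iS : (CLOLang ι).Structure (↥B₁ ⊕ₗ (D ⊕ₗ ↥B₂)) :=
      CLOStr ι _ (sumColor2 (subColor cM B₁) (sumColor2 cD (subColor cM B₂)))
    show @ElementarilyEquivalent (CLOLang ι) (↥B₁ ⊕ₗ (D ⊕ₗ ↥B₂)) M iS iM
    refine elementarilyEquivalent_iff.2 fun σ => ?_
    have h1 : Sat (↥B₁ ⊕ₗ (D ⊕ₗ ↥B₂))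
        (sumColor2 (subColor cM B₁) (sumColor2 cD (subColor cM B₂))) σ default ↔
        Sat M cM σ default :=
      (hOutSent σ).symm.trans ((hIso Empty σ default).trans sat_empty_congr)
    exact h1
  · -- description of the realization set
    intro x
    constructor
    · intro hx
      rcases x with a | (d | b)
      · exfalso
        have haC : (a : M) ∉ C := fun hmem => lt_irrefl (a : M) (h1C _ a.2 _ hmem)
        have : ¬ ∀ φ ∈ Φ, Sat M cM φ (fun _ => (a : M)) := haC
        push_neg at this
        obtain ⟨φ, hφ, hnot⟩ := this
        have hxφ : Sat (↥B₁ ⊕ₗ (D ⊕ₗ ↥B₂))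
            (sumColor2 (subColor cM B₁) (sumColor2 cD (subColor cM B₂))) φ
            (fun _ => toLex (Sum.inl a)) := hx φ hφ
        have := (param_swap_right_leftparam hInnSent φ a).2 hxφ
        exact hnot ((hIso Unit φ (fun _ => toLex (Sum.inl a))).1 this)
      · exact ⟨d, rfl⟩
      · exfalso
        have hbC : (b : M) ∉ C := fun hmem => lt_irrefl (b : M) (hC2 _ hmem _ b.2)
        have : ¬ ∀ φ ∈ Φ, Sat M cM φ (fun _ => (b : M)) := hbC
        push_neg at this
        obtain ⟨φ, hφ, hnot⟩ := this
        have hxφ : Sat (↥B₁ ⊕ₗ (D ⊕ₗ ↥B₂))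
            (sumColor2 (subColor cM B₁) (sumColor2 cD (subColor cM B₂))) φ
            (fun _ => toLex (Sum.inr (toLex (Sum.inr b)))) := hx φ hφ
        have hP : ∀ ψ : (CLOLang ι).Formula Unit,
            Sat (↥C ⊕ₗ ↥B₂) (sumColor2 (subColor cM C) (subColor cM B₂)) ψ
              (fun _ => toLex (Sum.inr b)) ↔
            Sat (D ⊕ₗ ↥B₂) (sumColor2 cD (subColor cM B₂)) ψ
              (fun _ => toLex (Sum.inr b)) := fun ψ => param_swap_left hDD ψ b
        have := (param_swap_right_rightparam hP φ).2 hxφ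
        exact hnot ((hIso Unit φ (fun _ => toLex (Sum.inr (toLex (Sum.inr b))))).1 this)
    · rintro ⟨d, rfl⟩
      intro φ hφ
      -- decompose φ along the outer sum, variable in the right part
      obtain ⟨l, hl⟩ := FV (τ := Unit) (ι := ι) φ Empty Unit (fun _ => Sum.inr ())
      -- decompose each right-component along the inner sum, variable in the left part
      have hmex : ∀ pr : (CLOLang ι).Formula Empty × (CLOLang ι).Formula Unit,
          ∃ m : List ((CLOLang ι).Formula Unit × (CLOLang ι).Formula Empty),
          ∀ (α β : Type) [LinearOrder α] [LinearOrder β]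
            (ca : ι → Set α) (cb : ι → Set β) (va : Unit → α) (vb : Empty → β),
            SatBF (α ⊕ₗ β) (sumColor2 ca cb) pr.2
                (fun _ : Unit => mrg va vb (Sum.inl ()))
                (fun _ : Fin 0 => mrg va vb (Sum.inl ()))
              ↔ SatL ca cb m va vb :=
        fun pr => FV (τ := Unit) pr.2 Unit Empty (fun _ => Sum.inl ())
      choose m hm using hmex
      -- every element of C satisfies the decomposition
      have hCs : ∀ c : ↥C, ∃ pr ∈ l, Sat ↥B₁ (subColor cM B₁) pr.1 default ∧
          ∃ qr ∈ m pr, Sat (↥C) (subColor cM C) qr.1 (fun _ => c) ∧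
            Sat ↥B₂ (subColor cM B₂) qr.2 default := by
        intro c
        have h0 : Sat M cM φ (fun _ => (c : M)) := c.2 φ hφ
        have h1 : Sat (↥B₁ ⊕ₗ (↥C ⊕ₗ ↥B₂))
            (sumColor2 (subColor cM B₁) (sumColor2 (subColor cM C) (subColor cM B₂))) φ
            (fun _ => toLex (Sum.inr (toLex (Sum.inl c)))) :=
          (hIso Unit φ (fun _ => toLex (Sum.inr (toLex (Sum.inl c))))).2 h0
        have h3 : SatL (subColor cM B₁) (sumColor2 (subColor cM C) (subColor cM B₂)) l
            default (fun _ => toLex (Sum.inl c)) :=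
          (hl (↥B₁) (↥C ⊕ₗ ↥B₂) (subColor cM B₁)
            (sumColor2 (subColor cM C) (subColor cM B₂)) default
            (fun _ => toLex (Sum.inl c))).1 ((sat_iff_satBF _).1 h1)
        obtain ⟨pr, hpr, hpr1, hpr2⟩ := h3
        have h5 : SatL (subColor cM C) (subColor cM B₂) (m pr) (fun _ => c) default :=
          (hm pr (↥C) (↥B₂) (subColor cM C) (subColor cM B₂) (fun _ => c) default).1
            ((sat_iff_satBF _).1 hpr2)
        exact ⟨pr, hpr, hpr1, h5⟩
      let LJ : List ((CLOLang ι).Formula Unit) := l.flatMap fun pr =>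
        if Sat ↥B₁ (subColor cM B₁) pr.1 default then
          (m pr).filterMap fun qr =>
            if Sat ↥B₂ (subColor cM B₂) qr.2 default then some qr.1 else none
        else []
      have hLJmem : ∀ pr ∈ l, ∀ qr ∈ m pr, Sat ↥B₁ (subColor cM B₁) pr.1 default →
          Sat ↥B₂ (subColor cM B₂) qr.2 default → qr.1 ∈ LJ := by
        intro pr hpr qr hqr hA hB
        refine List.mem_flatMap.2 ⟨pr, hpr, ?_⟩
        rw [if_pos hA]
        exact List.mem_filterMap.2 ⟨qr, hqr, by rw [if_pos hB]⟩
      have hLJmem' : ∀ ψ ∈ LJ, ∃ pr ∈ l, Sat ↥B₁ (subColor cM B₁) pr.1 default ∧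
          ∃ qr ∈ m pr, qr.1 = ψ ∧ Sat ↥B₂ (subColor cM B₂) qr.2 default := by
        intro ψ hψ
        obtain ⟨pr, hpr, hmem⟩ := List.mem_flatMap.1 hψ
        by_cases hA : Sat ↥B₁ (subColor cM B₁) pr.1 default
        · rw [if_pos hA] at hmem
          obtain ⟨qr, hqr, hq⟩ := List.mem_filterMap.1 hmem
          by_cases hB : Sat ↥B₂ (subColor cM B₂) qr.2 default
          · rw [if_pos hB] at hq
            exact ⟨pr, hpr, hA, qr, hqr, Option.some.inj hq, hB⟩
          · rw [if_neg hB] at hq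
            cases hq
        · rw [if_neg hA] at hmem
          exact absurd hmem List.not_mem_nil
      have hCall : Sat (↥C) (subColor cM C) (allOfList LJ) default := by
        refine sat_allOfList.2 fun c => ?_
        obtain ⟨pr, hpr, hA, qr, hqr, hc, hB⟩ := hCs c
        exact ⟨qr.1, hLJmem pr hpr qr hqr hA hB, hc⟩
      have hDall : Sat D cD (allOfList LJ) default := (hDD (allOfList LJ)).1 hCall
      obtain ⟨ψ, hψLJ, hψd⟩ := sat_allOfList.1 hDall d
      obtain ⟨pr, hpr, hA, qr, hqr, hqψ, hB⟩ := hLJmem' ψ hψLJ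
      have hInnD : Sat (D ⊕ₗ ↥B₂) (sumColor2 cD (subColor cM B₂)) pr.2
          (fun _ => toLex (Sum.inl d)) := by
        refine (sat_iff_satBF _).2
          ((hm pr D (↥B₂) cD (subColor cM B₂) (fun _ => d) default).2 ?_)
        refine ⟨qr, hqr, ?_, hB⟩
        rw [hqψ]
        exact hψd
      have hS : SatL (subColor cM B₁) (sumColor2 cD (subColor cM B₂)) l default
          (fun _ => toLex (Sum.inl d)) := ⟨pr, hpr, hA, hInnD⟩
      exact (sat_iff_satBF _).2
        ((hl (↥B₁) (D ⊕ₗ ↥B₂) (subColor cM B₁) (sumColor2 cD (subColor cM B₂)) default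
          (fun _ => toLex (Sum.inl d))).2 hS)
end
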